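/- arXiv:2601.17928 — 14 statements merged into one kernel-verified Lean document; each statement's English description precedes it below -/
import Mathlib

section
/- Let Q be a quandle. For every x ∈ Q, the image φ_Q(x) has infinite order in the enveloping group G(Q); consequently, if Q is nonempty, then G(Q) is an infinite group. -/
open Quandles

/-- The constant map to `Multiplicative ℤ` (value `ofAdd 1`) as a quandle hom into the
conjugation quandle of `Multiplicative ℤ`. -/
def augHom (Q : Type) [Quandle Q] : Q →◃ Quandle.Conj (Multiplicative ℤ) where
  toFun _ := Multiplicative.ofAdd 1
  map_act' {x y} := by simp [Quandle.Conj, Quandle.conj_act_eq_conj, mul_comm]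

/-- For a quandle `Q`, every `φ_Q x` has infinite order in the enveloping
group `G(Q)`, and consequently `G(Q)` is infinite whenever `Q` is nonempty. -/
theorem envelGroup_image_infinite_order (Q : Type) [Quandle Q] :
    (∀ x : Q, ¬ IsOfFinOrder (Rack.toEnvelGroup Q x : Rack.EnvelGroup Q)) ∧
      (Nonempty Q → Infinite (Rack.EnvelGroup Q)) := by
  have key : ∀ x : Q, ¬ IsOfFinOrder (Rack.toEnvelGroup Q x : Rack.EnvelGroup Q) := by
    intro x hfin
    have h := (Rack.toEnvelGroup.map (augHom Q)).isOfFinOrder hfin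
    have heval : Rack.toEnvelGroup.map (augHom Q) (Rack.toEnvelGroup Q x)
        = Multiplicative.ofAdd (1 : ℤ) := by
      have := congrArg (fun f => f.toFun x) (Rack.toEnvelGroup.univ Q (Multiplicative ℤ) (augHom Q))
      exact this
    rw [heval] at h
    obtain ⟨n, hn, hpow⟩ := h.exists_pow_eq_one
    have : (n : ℤ) * 1 = 0 := by
      have := congrArg Multiplicative.toAdd hpow
      simpa using this
    omega
  refine ⟨key, fun ⟨x⟩ => ?_⟩
  rcases finite_or_infinite (Rack.EnvelGroup Q) with h | h
  · exact absurd (isOfFinOrder_of_finite _) (key x)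
  · exact h
end

section
/- Let Q be a quandle containing elements x, y with x ▷ y = y and y ▷ x ≠ x. Then φ_Q(x) = φ_Q(y ▷ x) in the enveloping group G(Q); in particular the canonical map φ_Q : Q → G(Q) is not injective. -/
open Quandles

/-- If a quandle `Q` has elements `x, y` with `x ◃ y = y` and `y ◃ x ≠ x`,
then `φ_Q x = φ_Q (y ◃ x)` in `G(Q)`; in particular `φ_Q` is not injective. -/
theorem toEnvelGroup_not_injective (Q : Type) [Quandle Q] (x y : Q)
    (h1 : x ◃ y = y) (h2 : y ◃ x ≠ x) :
    (Rack.toEnvelGroup Q x : Rack.EnvelGroup Q) = Rack.toEnvelGroup Q (y ◃ x) ∧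
      ¬ Function.Injective (Rack.toEnvelGroup Q) := by
  set φ := Rack.toEnvelGroup Q with hφ
  have key : ∀ a b : Q, φ (a ◃ b) = φ a * φ b * (φ a)⁻¹ := fun a b => by
    have := φ.map_act (x := a) (y := b)
    simp only [Quandle.conj_act_eq_conj] at this; exact this
  have hc : φ x * φ y * (φ x)⁻¹ = φ y := by rw [← key, h1]
  have hcomm : φ x * φ y = φ y * φ x := mul_inv_eq_iff_eq_mul.mp hc
  have heq : φ x = φ (y ◃ x) := by
    rw [key, ← hcomm]
    group
  refine ⟨heq, fun hinj => h2 ?_⟩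
  exact (hinj heq.symm)
end

section
/- Let Q be a quandle and let Q_conj denote the image φ_Q(Q) ⊆ G(Q), regarded as a quandle under conjugation a ▷ b = a b a⁻¹. Let θ_Q : Q → Q_conj be the surjection x ↦ φ_Q(x). Then the induced group homomorphism G(θ_Q) : G(Q) → G(Q_conj), determined by G(θ_Q)(φ_Q(x)) = φ_{Q_conj}(θ_Q(x)) for all x ∈ Q, is a group isomorphism. -/
open Quandles

/-- The image quandle `Q_conj = φ_Q(Q) ⊆ G(Q)`. -/
def QConj (Q : Type) [Quandle Q] : Type :=
  {g : Rack.EnvelGroup Q // ∃ x : Q, (Rack.toEnvelGroup Q x : Rack.EnvelGroup Q) = g}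

/-- `Q_conj` is a quandle under conjugation `a ▷ b = a * b * a⁻¹` in `G(Q)`. -/
instance (Q : Type) [Quandle Q] : Quandle (QConj Q) where
  act a b := ⟨a.1 * b.1 * a.1⁻¹, by
    obtain ⟨x, hx⟩ := a.2
    obtain ⟨y, hy⟩ := b.2
    refine ⟨x ◃ y, ?_⟩
    rw [← hx, ← hy]
    exact (Rack.toEnvelGroup Q).map_act⟩
  self_distrib := by
    intro a b c
    apply Subtype.ext
    show a.1 * (b.1 * c.1 * b.1⁻¹) * a.1⁻¹ =
      (a.1 * b.1 * a.1⁻¹) * (a.1 * c.1 * a.1⁻¹) * (a.1 * b.1 * a.1⁻¹)⁻¹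
    group
  invAct a b := ⟨a.1⁻¹ * b.1 * a.1, by
    obtain ⟨x, hx⟩ := a.2
    obtain ⟨y, hy⟩ := b.2
    refine ⟨x ◃⁻¹ y, ?_⟩
    have h : (Rack.toEnvelGroup Q) (x ◃ (x ◃⁻¹ y)) =
        (Rack.toEnvelGroup Q x : Rack.EnvelGroup Q) * (Rack.toEnvelGroup Q (x ◃⁻¹ y)) *
          (Rack.toEnvelGroup Q x : Rack.EnvelGroup Q)⁻¹ := (Rack.toEnvelGroup Q).map_act
    rw [Rack.right_inv] at h
    rw [← hx, ← hy, h]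
    group⟩
  left_inv := by
    intro a b
    apply Subtype.ext
    show a.1⁻¹ * (a.1 * b.1 * a.1⁻¹) * a.1 = b.1
    group
  right_inv := by
    intro a b
    apply Subtype.ext
    show a.1 * (a.1⁻¹ * b.1 * a.1) * a.1⁻¹ = b.1
    group
  fix := by
    intro a
    apply Subtype.ext
    show a.1 * a.1 * a.1⁻¹ = a.1
    group

/-- The map `θ_Q : Q → QConj Q`. -/
def theta (Q : Type) [Quandle Q] (x : Q) : QConj Q :=
  ⟨Rack.toEnvelGroup Q x, x, rfl⟩

theorem theta_act (Q : Type) [Quandle Q] (x y : Q) :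
    theta Q (x ◃ y) = theta Q x ◃ theta Q y := by
  apply Subtype.ext
  exact (Rack.toEnvelGroup Q).map_act

/-- θ_Q followed by φ_{QConj}, as a quandle (shelf) hom into `Conj (G(QConj))`. -/
def thetaHom (Q : Type) [Quandle Q] : Q →◃ Quandle.Conj (Rack.EnvelGroup (QConj Q)) where
  toFun x := Rack.toEnvelGroup (QConj Q) (theta Q x)
  map_act' := by
    intro x y
    show Rack.toEnvelGroup (QConj Q) (theta Q (x ◃ y)) = _
    rw [theta_act]
    exact (Rack.toEnvelGroup (QConj Q)).map_act

/-- The inclusion `QConj Q → Conj (G(Q))` as a shelf hom. -/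
def inclHom (Q : Type) [Quandle Q] : QConj Q →◃ Quandle.Conj (Rack.EnvelGroup Q) where
  toFun a := a.1
  map_act' := rfl

theorem map_apply {R : Type} [Rack R] {G : Type} [Group G] (f : R →◃ Quandle.Conj G) (x : R) :
    Rack.toEnvelGroup.map f (Rack.toEnvelGroup R x) = f x := by
  have := Rack.toEnvelGroup.univ R G f
  exact congrArg (fun g => g.toFun x) this

theorem hom_ext {Q : Type} [Rack Q] {G : Type} [Group G]
    (g₁ g₂ : Rack.EnvelGroup Q →* G)
    (h : ∀ x : Q, g₁ (Rack.toEnvelGroup Q x) = g₂ (Rack.toEnvelGroup Q x)) : g₁ = g₂ := by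
  have h1 : g₁ = Rack.toEnvelGroup.map ((Quandle.Conj.map g₂).comp (Rack.toEnvelGroup Q)) := by
    apply Rack.toEnvelGroup.univ_uniq
    apply DFunLike.ext
    intro x
    exact (h x).symm
  have h2 : g₂ = Rack.toEnvelGroup.map ((Quandle.Conj.map g₂).comp (Rack.toEnvelGroup Q)) := by
    apply Rack.toEnvelGroup.univ_uniq
    rfl
  exact h1.trans h2.symm

/-- the group homomorphism `G(θ_Q) : G(Q) → G(Q_conj)` determined by
`G(θ_Q)(φ_Q x) = φ_{Q_conj}(θ_Q x)` is an isomorphism. -/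
theorem envelGroup_iso_envelGroup_qconj (Q : Type) [Quandle Q] :
    ∃ h : Rack.EnvelGroup Q →* Rack.EnvelGroup (QConj Q),
      (∀ x : Q, h (Rack.toEnvelGroup Q x) =
        Rack.toEnvelGroup (QConj Q) ⟨Rack.toEnvelGroup Q x, x, rfl⟩) ∧
      Function.Bijective h := by
  set h := Rack.toEnvelGroup.map (thetaHom Q) with hh
  set k := Rack.toEnvelGroup.map (inclHom Q) with hk
  have hgen : ∀ x : Q, h (Rack.toEnvelGroup Q x) =
      Rack.toEnvelGroup (QConj Q) ⟨Rack.toEnvelGroup Q x, x, rfl⟩ :=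
    fun x => map_apply (thetaHom Q) x
  have kgen : ∀ a : QConj Q, k (Rack.toEnvelGroup (QConj Q) a) = a.1 :=
    fun a => map_apply (inclHom Q) a
  have hkh : k.comp h = MonoidHom.id _ := by
    apply hom_ext
    intro x
    simp only [MonoidHom.comp_apply, MonoidHom.id_apply, hgen, kgen]
    exact kgen _
  have hhk : h.comp k = MonoidHom.id _ := by
    apply hom_ext
    intro a
    obtain ⟨g, x, hx⟩ := a
    simp only [MonoidHom.comp_apply, MonoidHom.id_apply, kgen]
    subst hx
    exact hgen x
  refine ⟨h, hgen, ?_, ?_⟩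
  · intro a b hab
    have := congrArg k hab
    calc a = (k.comp h) a := by rw [hkh]; rfl
    _ = (k.comp h) b := this
    _ = b := by rw [hkh]; rfl
  · intro b
    refine ⟨k b, ?_⟩
    have := congrArg (fun f => f b) hhk
    exact this
end

section
/- Let Q be a quandle whose enveloping group G(Q) is abelian. Then G(Q) is isomorphic to the free abelian group on the set Q_conj = φ_Q(Q) (the image of the canonical map). -/
open Quandles

lemma envelGroup_hom_ext {R : Type*} [Rack R] {G : Type*} [Group G]
    (F₁ F₂ : Rack.EnvelGroup R →* G)
    (hx : ∀ x : R, F₁ (Rack.toEnvelGroup R x) = F₂ (Rack.toEnvelGroup R x)) : F₁ = F₂ := by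
  apply Rack.toEnvelGroup.map.symm.injective
  ext x
  exact hx x

/-- if `G(Q)` is abelian then it is isomorphic to the free abelian group
on the set `Q_conj = φ_Q(Q)` (the image of the canonical map). -/
theorem envelGroup_abelian_iso_freeAbelianGroup (Q : Type) [Quandle Q]
    (h : ∀ a b : Rack.EnvelGroup Q, a * b = b * a) :
    Nonempty (Rack.EnvelGroup Q ≃*
      Multiplicative (FreeAbelianGroup
        (Set.range fun x : Q => (Rack.toEnvelGroup Q x : Rack.EnvelGroup Q)))) := by
  set S := Set.range fun x : Q => (Rack.toEnvelGroup Q x : Rack.EnvelGroup Q) with hS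
  -- the image of the action is trivial in the abelian enveloping group
  have key : ∀ x y : Q, (Rack.toEnvelGroup Q) (x ◃ y) = Rack.toEnvelGroup Q y := by
    intro x y
    rw [ShelfHom.map_act, Quandle.conj_act_eq_conj,
      h (Rack.toEnvelGroup Q x) (Rack.toEnvelGroup Q y), mul_inv_cancel_right]
  -- the shelf hom into the free abelian group
  let fsh : Q →◃ Quandle.Conj (Multiplicative (FreeAbelianGroup S)) :=
    { toFun := fun x =>
        Multiplicative.ofAdd (FreeAbelianGroup.of (⟨Rack.toEnvelGroup Q x, ⟨x, rfl⟩⟩ : S))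
      map_act' := by
        intro x y
        simp only [Quandle.conj_act_eq_conj]
        rw [mul_comm, inv_mul_cancel_left]
        congr 1
        exact congrArg FreeAbelianGroup.of (Subtype.ext (key x y)) }
  let f : Rack.EnvelGroup Q →* Multiplicative (FreeAbelianGroup S) := Rack.toEnvelGroup.map fsh
  have hf : ∀ x : Q, f (Rack.toEnvelGroup Q x) = fsh x := fun x =>
    congrArg (fun F : Q →◃ Quandle.Conj (Multiplicative (FreeAbelianGroup S)) => F x)
      (Rack.toEnvelGroup.univ Q (Multiplicative (FreeAbelianGroup S)) fsh)
  letI : CommGroup (Rack.EnvelGroup Q) :=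
    { (inferInstance : Group (Rack.EnvelGroup Q)) with mul_comm := h }
  let g : Multiplicative (FreeAbelianGroup S) →* Rack.EnvelGroup Q :=
    AddMonoidHom.toMultiplicativeLeft
      (FreeAbelianGroup.lift fun s : S => Additive.ofMul (s : Rack.EnvelGroup Q))
  have hg : ∀ s : S, g (Multiplicative.ofAdd (FreeAbelianGroup.of s)) = (s : Rack.EnvelGroup Q) := by
    intro s
    simp [g, AddMonoidHom.coe_toMultiplicativeLeft]
  have hgf : g.comp f = MonoidHom.id _ := by
    apply envelGroup_hom_ext
    intro x
    simp only [MonoidHom.comp_apply, MonoidHom.id_apply]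
    rw [hf x]
    exact hg _
  have hfg : f.comp g = MonoidHom.id _ := by
    have : (MonoidHom.toAdditiveRight (f.comp g)) = MonoidHom.toAdditiveRight (MonoidHom.id _) := by
      ext s
      simp only [MonoidHom.coe_toAdditiveRight, Function.comp_apply, MonoidHom.comp_apply, MonoidHom.id_apply]
      have h1 : g (Multiplicative.ofAdd (FreeAbelianGroup.of s)) = (s : Rack.EnvelGroup Q) := hg s
      obtain ⟨x, hx⟩ := s.2
      have h2 : f (s : Rack.EnvelGroup Q) = fsh x := by rw [← hx]; exact hf x
      have h3 : fsh x = Multiplicative.ofAdd (FreeAbelianGroup.of s) := by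
        show Multiplicative.ofAdd (FreeAbelianGroup.of _) = _
        exact congrArg (fun t => Multiplicative.ofAdd (FreeAbelianGroup.of t)) (Subtype.ext hx)
      rw [h1, h2, h3]
    exact MonoidHom.toAdditiveRight.injective this
  exact ⟨{ toFun := f, invFun := g,
           left_inv := fun a => DFunLike.congr_fun hgf a,
           right_inv := fun a => DFunLike.congr_fun hfg a,
           map_mul' := f.map_mul }⟩
end

section
/- Let Q be an injective quandle, i.e. φ_Q : Q → G(Q) is injective. Then there is a surjective group homomorphism h : G(Q) → Inn(Q) satisfying h(φ_Q(x)) = L_x for all x ∈ Q, and the kernel of h is exactly the center of G(Q). In particular G(Q) is a central extension of Inn(Q). -/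
open Quandles

/-- The group `Inn(Q)` of inner automorphisms of a quandle `Q`: the subgroup of the
permutation group of `Q` generated by the left translations `L_x : y ↦ x ◃ y`. -/
def quandleInn (Q : Type) [Quandle Q] : Subgroup (Equiv.Perm Q) :=
  Subgroup.closure (Set.range fun x : Q => (Rack.act' x : Equiv.Perm Q))

section Aux

variable {Q : Type} [Quandle Q]

/-- The enveloping group is generated by the image of the rack. -/
lemma envel_closure_top :
    Subgroup.closure (Set.range fun x : Q => (Rack.toEnvelGroup Q x : Rack.EnvelGroup Q)) = ⊤ := by
  rw [eq_top_iff]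
  intro g _
  refine Quotient.inductionOn g ?_
  intro a
  induction a with
  | unit => exact Subgroup.one_mem _
  | incl x => exact Subgroup.subset_closure ⟨x, rfl⟩
  | mul a b iha ihb => exact Subgroup.mul_mem _ iha ihb
  | inv a iha => exact Subgroup.inv_mem _ iha

/-- Key equivariance: conjugation by `g` on the image of `Q` is the image of the
permutation action `envelAction g`. -/
lemma envel_conj (g : Rack.EnvelGroup Q) (x : Q) :
    g * Rack.toEnvelGroup Q x * g⁻¹ = Rack.toEnvelGroup Q (Rack.envelAction g x) := by
  have key : ∀ g ∈ Subgroup.closure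
      (Set.range fun x : Q => (Rack.toEnvelGroup Q x : Rack.EnvelGroup Q)),
      ∀ x : Q, g * Rack.toEnvelGroup Q x * g⁻¹ =
        Rack.toEnvelGroup Q (Rack.envelAction g x) := by
    intro g hg
    induction hg using Subgroup.closure_induction'' with
    | one => intro x; simp
    | mem g hg =>
      obtain ⟨y, rfl⟩ := hg
      intro x
      have := (Rack.toEnvelGroup Q).map_act' (x := y) (y := x)
      simp only [Rack.envelAction_prop]
      exact this.symm
    | inv_mem g hg =>
      obtain ⟨y, rfl⟩ := hg
      intro x
      have := (Rack.toEnvelGroup Q).map_act' (x := y)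
        (y := (Rack.envelAction (Rack.toEnvelGroup Q y)⁻¹ x))
      have h2 : Rack.envelAction (Rack.toEnvelGroup Q y)
          (Rack.envelAction (Rack.toEnvelGroup Q y)⁻¹ x) = x := by
        rw [← Equiv.Perm.mul_apply, ← map_mul, mul_inv_cancel, map_one, Equiv.Perm.one_apply]
      have h3 : Rack.toEnvelGroup Q y * Rack.toEnvelGroup Q
            (Rack.envelAction (Rack.toEnvelGroup Q y)⁻¹ x) * (Rack.toEnvelGroup Q y)⁻¹ =
          Rack.toEnvelGroup Q x := by
        have := (Rack.toEnvelGroup Q).map_act'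
          (x := y) (y := Rack.envelAction (Rack.toEnvelGroup Q y)⁻¹ x)
        rw [← Rack.envelAction_prop y, h2] at this
        exact this.symm
      rw [← h3]; group
    | mul a b ha hb iha ihb =>
      intro x
      have : a * b * Rack.toEnvelGroup Q x * (a * b)⁻¹ =
          a * (b * Rack.toEnvelGroup Q x * b⁻¹) * a⁻¹ := by group
      rw [this, ihb, iha, map_mul, Equiv.Perm.mul_apply]
  exact key g (by rw [envel_closure_top]; trivial) x

end Aux

/-- for an injective quandle `Q`, there is a surjective group homomorphism
`h : G(Q) → Inn(Q)` with `h (φ_Q x) = L_x` whose kernel is exactly the center of `G(Q)`. -/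
theorem envelGroup_central_extension_of_inn (Q : Type) [Quandle Q]
    (hinj : Function.Injective (Rack.toEnvelGroup Q)) :
    ∃ h : Rack.EnvelGroup Q →* quandleInn Q,
      Function.Surjective h ∧
      (∀ x : Q, h (Rack.toEnvelGroup Q x) =
        ⟨(Rack.act' x : Equiv.Perm Q), Subgroup.subset_closure ⟨x, rfl⟩⟩) ∧
      h.ker = Subgroup.center (Rack.EnvelGroup Q) := by
  -- the ambient homomorphism
  set h₀ : Rack.EnvelGroup Q →* Equiv.Perm Q := Rack.envelAction with hh₀
  have hmem : ∀ g : Rack.EnvelGroup Q, h₀ g ∈ quandleInn Q := by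
    intro g
    have : g ∈ Subgroup.closure
        (Set.range fun x : Q => (Rack.toEnvelGroup Q x : Rack.EnvelGroup Q)) := by
      rw [envel_closure_top]; trivial
    induction this using Subgroup.closure_induction'' with
    | one => rw [map_one]; exact Subgroup.one_mem _
    | mem g hg =>
      obtain ⟨y, rfl⟩ := hg
      exact Subgroup.subset_closure ⟨y, rfl⟩
    | inv_mem g hg =>
      obtain ⟨y, rfl⟩ := hg
      rw [map_inv]
      exact Subgroup.inv_mem _ (Subgroup.subset_closure ⟨y, rfl⟩)
    | mul a b _ _ iha ihb => rw [map_mul]; exact Subgroup.mul_mem _ iha ihb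
  refine ⟨h₀.codRestrict (quandleInn Q) hmem, ?_, ?_, ?_⟩
  · -- surjectivity
    rintro ⟨p, hp⟩
    have : p ∈ Subgroup.closure (Set.range fun x : Q => (Rack.act' x : Equiv.Perm Q)) := hp
    -- show p is in the range of h₀
    have hgen : ∀ y : Q, h₀ (Rack.toEnvelGroup Q y) = Rack.act' y := by
      intro y; ext z; simp [hh₀]
    have hr : p ∈ h₀.range := by
      induction this using Subgroup.closure_induction'' with
      | one => exact ⟨1, map_one _⟩
      | mem g hg =>
        obtain ⟨y, rfl⟩ := hg
        exact ⟨Rack.toEnvelGroup Q y, hgen y⟩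
      | inv_mem g hg =>
        obtain ⟨y, rfl⟩ := hg
        exact ⟨(Rack.toEnvelGroup Q y)⁻¹, by rw [map_inv, hgen]⟩
      | mul a b ha hb iha ihb =>
        obtain ⟨ga, hga⟩ := iha ha
        obtain ⟨gb, hgb⟩ := ihb hb
        exact ⟨ga * gb, by rw [map_mul, hga, hgb]⟩
    obtain ⟨g, hg⟩ := hr
    exact ⟨g, Subtype.ext hg⟩
  · -- value on generators
    intro x
    apply Subtype.ext
    ext z
    simp [hh₀]
  · -- kernel = center
    ext g
    simp only [MonoidHom.mem_ker]
    constructor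
    · intro hgker
      have hg1 : h₀ g = 1 := congrArg Subtype.val hgker
      rw [Subgroup.mem_center_iff]
      intro k
      have hcomm : ∀ x : Q, Commute (Rack.toEnvelGroup Q x) g := by
        intro x
        have := envel_conj g x
        rw [hg1, Equiv.Perm.one_apply] at this
        have : g * Rack.toEnvelGroup Q x = Rack.toEnvelGroup Q x * g := by
          have h' := this
          calc g * Rack.toEnvelGroup Q x
              = g * Rack.toEnvelGroup Q x * g⁻¹ * g := by group
            _ = Rack.toEnvelGroup Q x * g := by rw [h']
        exact this.symm
      have hk : k ∈ Subgroup.closure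
          (Set.range fun x : Q => (Rack.toEnvelGroup Q x : Rack.EnvelGroup Q)) := by
        rw [envel_closure_top]; trivial
      induction hk using Subgroup.closure_induction'' with
      | one => simp
      | mem a ha => obtain ⟨y, rfl⟩ := ha; exact hcomm y
      | inv_mem a ha =>
        obtain ⟨y, rfl⟩ := ha
        exact ((hcomm y).inv_left).eq
      | mul a b _ _ iha ihb =>
        calc a * b * g = a * (b * g) := by group
          _ = a * (g * b) := by rw [ihb]
          _ = (a * g) * b := by group
          _ = g * (a * b) := by rw [iha]; group
    · intro hgc
      apply Subtype.ext
      ext x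
      have := envel_conj g x
      have hcen : g * Rack.toEnvelGroup Q x * g⁻¹ = Rack.toEnvelGroup Q x := by
        rw [Subgroup.mem_center_iff] at hgc
        rw [← hgc (Rack.toEnvelGroup Q x)]; group
      rw [hcen] at this
      have := hinj this
      simp [hh₀, ← this]
end

section
/- Let Q be a finite quandle. Then there exist n and an injective group homomorphism ρ : G(Q) → GL_n(ℤ), i.e. the enveloping group of a finite quandle admits a faithful representation over ℤ. -/
open Function

namespace EnvelRep



variable {H : Type*} [Group H] [DecidableEq H]

private lemma conj_list_prod (s : H) (l : List H) :
    (l.map fun x => s * x * s⁻¹).prod = s * l.prod * s⁻¹ := by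
  induction l with
  | nil => simp
  | cons a t ih =>
    simp only [List.map_cons, List.prod_cons, ih]
    group

private lemma extract (S : Finset H) (hconj : ∀ a ∈ S, ∀ b ∈ S, a * b * a⁻¹ ∈ S)
    (s : H) (hs : s ∈ S) :
    ∀ l : List H, (∀ x ∈ l, x ∈ S) →
      ∃ l' : List H, (∀ x ∈ l', x ∈ S) ∧
        l'.length + l.count s = l.length ∧
        l.prod = l'.prod * s ^ l.count s := by
  intro l
  induction l with
  | nil => exact fun _ => ⟨[], by simp, by simp, by simp⟩
  | cons a t ih =>
    intro hmem
    obtain ⟨t', ht'S, hlen, hprod⟩ := ih fun x hx => hmem x (List.mem_cons_of_mem _ hx)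
    by_cases ha : a = s
    · subst ha
      refine ⟨t'.map fun x => a * x * a⁻¹, ?_, ?_, ?_⟩
      · intro x hx
        obtain ⟨y, hy, rfl⟩ := List.mem_map.1 hx
        exact hconj a (hmem a (List.mem_cons_self)) y (ht'S y hy)
      · simpa [List.count_cons_self] using by omega
      · rw [List.count_cons_self, List.prod_cons, hprod, conj_list_prod,
          pow_succ']
        group
    · refine ⟨a :: t', ?_, ?_, ?_⟩
      · intro x hx
        rcases List.mem_cons.1 hx with rfl | hx
        · exact hmem x (List.mem_cons_self)
        · exact ht'S x hx
      · rw [List.count_cons_of_ne ha, List.length_cons, List.length_cons]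
        omega
      · rw [List.count_cons_of_ne ha, List.prod_cons, List.prod_cons, hprod,
          mul_assoc]

private lemma exists_short_word (S : Finset H) (m : ℕ) (hm : 0 < m)
    (hconj : ∀ a ∈ S, ∀ b ∈ S, a * b * a⁻¹ ∈ S) (hord : ∀ s ∈ S, s ^ m = 1) :
    ∀ l : List H, (∀ x ∈ l, x ∈ S) →
      ∃ l' : List H, (∀ x ∈ l', x ∈ S) ∧ l'.length ≤ (m - 1) * S.card ∧
        l'.prod = l.prod := by
  suffices key : ∀ (n : ℕ) (l : List H), l.length = n → (∀ x ∈ l, x ∈ S) →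
      ∃ l' : List H, (∀ x ∈ l', x ∈ S) ∧ l'.length ≤ (m - 1) * S.card ∧
        l'.prod = l.prod by
    exact fun l => key l.length l rfl
  intro n
  induction n using Nat.strong_induction_on with
  | _ n ih =>
  intro l hn
  subst hn
  by_cases hbig : ∃ s ∈ S, m ≤ l.count s
  · intro hmem
    obtain ⟨s, hs, hcount⟩ := hbig
    obtain ⟨l', hl'S, hlen, hprod⟩ := extract S hconj s hs l hmem
    set c := l.count s with hc
    have hc1 : s ^ c = s ^ (c % m) := by
      conv_lhs => rw [← Nat.div_add_mod c m, pow_add, pow_mul, hord s hs, one_pow, one_mul]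
    have hlt : (l' ++ List.replicate (c % m) s).length < l.length := by
      have := Nat.mod_lt c hm
      simp only [List.length_append, List.length_replicate]
      omega
    have hmem' : ∀ x ∈ l' ++ List.replicate (c % m) s, x ∈ S := by
      intro x hx
      rcases List.mem_append.1 hx with hx | hx
      · exact hl'S x hx
      · rw [List.eq_of_mem_replicate hx]; exact hs
    obtain ⟨l'', h1, h2, h3⟩ := ih _ hlt (l' ++ List.replicate (c % m) s) rfl hmem'
    refine ⟨l'', h1, h2, ?_⟩
    rw [h3, List.prod_append, List.prod_replicate, ← hc1, ← hprod]
  · intro hmem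
    refine ⟨l, hmem, ?_, rfl⟩
    push_neg at hbig
    have h1 : l.length = ∑ a ∈ (l : Multiset H).toFinset, l.count a := by
      simpa using (Multiset.toFinset_sum_count_eq (l : Multiset H)).symm
    have hsub : (l : Multiset H).toFinset ⊆ S := by
      intro a ha
      exact hmem a (by simpa using ha)
    calc l.length = ∑ a ∈ (l : Multiset H).toFinset, l.count a := h1
      _ ≤ ∑ a ∈ S, l.count a := Finset.sum_le_sum_of_subset hsub
      _ ≤ ∑ _a ∈ S, (m - 1) := Finset.sum_le_sum fun a ha => by
          have := hbig a ha; omega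
      _ = (m - 1) * S.card := by rw [Finset.sum_const, smul_eq_mul, mul_comm]

/-- products of at most `L` elements of `S` form a finite set -/
private lemma finite_prods (S : Finset H) (L : ℕ) :
    Set.Finite {h : H | ∃ l : List H, (∀ x ∈ l, x ∈ S) ∧ l.length ≤ L ∧ l.prod = h} := by
  induction L with
  | zero =>
    apply Set.Finite.subset (Set.finite_singleton 1)
    rintro h ⟨l, _, hlen, rfl⟩
    rw [List.length_eq_zero_iff.1 (Nat.le_zero.1 hlen)]
    simp
  | succ L ih =>
    apply Set.Finite.subset (ih.union (Set.Finite.biUnion S.finite_toSet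
      fun s _ => ih.image fun h => s * h))
    rintro h ⟨l, hmem, hlen, rfl⟩
    cases l with
    | nil => exact Or.inl ⟨[], by simp⟩
    | cons a t =>
      refine Or.inr (Set.mem_biUnion (hmem a (List.mem_cons_self)) ?_)
      exact ⟨t.prod, ⟨t, fun x hx => hmem x (List.mem_cons_of_mem _ hx), by
        simpa using Nat.succ_le_succ_iff.1 hlen, rfl⟩, by simp⟩

lemma finite_of_conj_closed_gen (S : Finset H) (m : ℕ) (hm : 0 < m)
    (hgen : Subgroup.closure (S : Set H) = ⊤)
    (hconj : ∀ a ∈ S, ∀ b ∈ S, a * b * a⁻¹ ∈ S)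
    (hord : ∀ s ∈ S, s ^ m = 1) : Finite H := by
  have key : ∀ h : H, ∃ l : List H, (∀ x ∈ l, x ∈ S) ∧ l.length ≤ (m - 1) * S.card ∧
      l.prod = h := by
    intro h
    -- first get a word over S ∪ S⁻¹, then over S, then shorten
    have hh : h ∈ Submonoid.closure ((S : Set H) ∪ (S : Set H)⁻¹) := by
      have : h ∈ (Subgroup.closure (S : Set H)).toSubmonoid := by
        rw [hgen]; trivial
      rwa [Subgroup.closure_toSubmonoid] at this
    obtain ⟨l, hl, rfl⟩ := Submonoid.exists_list_of_mem_closure hh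
    -- replace letters in S⁻¹ by powers of elements of S
    have : ∃ l' : List H, (∀ x ∈ l', x ∈ S) ∧ l'.prod = l.prod := by
      clear hh
      induction l with
      | nil => exact ⟨[], by simp, rfl⟩
      | cons a t ih =>
        obtain ⟨t', ht', hprod⟩ := ih fun x hx => hl x (List.mem_cons_of_mem _ hx)
        rcases hl a (List.mem_cons_self) with haS | haS
        · exact ⟨a :: t', by
            intro x hx
            rcases List.mem_cons.1 hx with rfl | hx
            exacts [haS, ht' x hx], by simp [hprod]⟩
        · refine ⟨List.replicate (m - 1) a⁻¹ ++ t', ?_, ?_⟩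
          · intro x hx
            rcases List.mem_append.1 hx with hx | hx
            · rw [List.eq_of_mem_replicate hx]; exact haS
            · exact ht' x hx
          · rw [List.prod_append, List.prod_replicate, hprod, List.prod_cons]
            congr 1
            have : (a⁻¹) ^ m = 1 := hord _ haS
            have hma : a⁻¹ ^ (m - 1) * a⁻¹ = 1 := by
              rw [← pow_succ, Nat.sub_add_cancel hm, this]
            calc a⁻¹ ^ (m-1) = a⁻¹ ^ (m-1) * (a⁻¹ * a) := by simp
              _ = (a⁻¹ ^ (m-1) * a⁻¹) * a := by group
              _ = a := by rw [hma, one_mul]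
    obtain ⟨l', hl'S, hprod⟩ := this
    obtain ⟨l'', h1, h2, h3⟩ := exists_short_word S m hm hconj hord l' hl'S
    exact ⟨l'', h1, h2, by rw [h3, hprod]⟩
  have := Set.finite_univ_iff.1 (Set.Finite.subset
    (finite_prods S ((m - 1) * S.card)) (fun h _ => key h))
  exact this




/-- Having a faithful integral representation. -/
def HasIntRep (G : Type*) [Group G] : Prop :=
  ∃ (n : ℕ) (ρ : G →* Matrix.GeneralLinearGroup (Fin n) ℤ), Function.Injective ρ

section EndUnits

variable {M₁ M₂ : Type*} [AddCommGroup M₁] [AddCommGroup M₂] [Module ℤ M₁] [Module ℤ M₂]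

/-- block sum of invertible endomorphisms -/
def prodUnitsEnd (u : (Module.End ℤ M₁)ˣ) (v : (Module.End ℤ M₂)ˣ) :
    (Module.End ℤ (M₁ × M₂))ˣ where
  val := LinearMap.prodMap u.val v.val
  inv := LinearMap.prodMap u.inv v.inv
  val_inv := LinearMap.ext fun p => Prod.ext
    (LinearMap.congr_fun u.val_inv p.1) (LinearMap.congr_fun v.val_inv p.2)
  inv_val := LinearMap.ext fun p => Prod.ext
    (LinearMap.congr_fun u.inv_val p.1) (LinearMap.congr_fun v.inv_val p.2)

lemma prodUnitsEnd_mul (u u' : (Module.End ℤ M₁)ˣ) (v v' : (Module.End ℤ M₂)ˣ) :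
    prodUnitsEnd (u * u') (v * v') = prodUnitsEnd u v * prodUnitsEnd u' v' := by
  ext : 1
  exact LinearMap.ext fun p => rfl

lemma prodUnitsEnd_one : prodUnitsEnd (1 : (Module.End ℤ M₁)ˣ) (1 : (Module.End ℤ M₂)ˣ) = 1 := by
  ext : 1
  exact LinearMap.ext fun p => rfl

/-- block sum group hom -/
def prodUnitsEndHom {G₁ G₂ : Type*} [Group G₁] [Group G₂]
    (ρ₁ : G₁ →* (Module.End ℤ M₁)ˣ) (ρ₂ : G₂ →* (Module.End ℤ M₂)ˣ) :
    G₁ × G₂ →* (Module.End ℤ (M₁ × M₂))ˣ where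
  toFun p := prodUnitsEnd (ρ₁ p.1) (ρ₂ p.2)
  map_one' := by simp [prodUnitsEnd_one]
  map_mul' p q := by simp [prodUnitsEnd_mul]

lemma prodUnitsEndHom_injective {G₁ G₂ : Type*} [Group G₁] [Group G₂]
    (ρ₁ : G₁ →* (Module.End ℤ M₁)ˣ) (ρ₂ : G₂ →* (Module.End ℤ M₂)ˣ)
    (h₁ : Injective ρ₁) (h₂ : Injective ρ₂) : Injective (prodUnitsEndHom ρ₁ ρ₂) := by
  intro p q hpq
  have hval := congrArg Units.val hpq
  have h1 : (ρ₁ p.1).val = (ρ₁ q.1).val := by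
    ext x
    exact congrArg Prod.fst (LinearMap.congr_fun hval ((x, 0) : M₁ × M₂))
  have h2 : (ρ₂ p.2).val = (ρ₂ q.2).val := by
    ext x
    exact congrArg Prod.snd (LinearMap.congr_fun hval ((0, x) : M₁ × M₂))
  exact Prod.ext (h₁ (Units.ext h1)) (h₂ (Units.ext h2))

end EndUnits

/-- From a faithful representation on a finite free `ℤ`-module, get `HasIntRep`. -/
lemma hasIntRep_of_module {G : Type*} [Group G] (M : Type) [AddCommGroup M] [Module ℤ M]
    [Module.Free ℤ M] [Module.Finite ℤ M]
    (ρ : G →* (Module.End ℤ M)ˣ) (hρ : Injective ρ) : HasIntRep G := by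
  classical
  let b := Module.Free.chooseBasis ℤ M
  let ι := Module.Free.ChooseBasisIndex ℤ M
  let e1 : Module.End ℤ M ≃+* Matrix ι ι ℤ :=
    { toEquiv := (LinearMap.toMatrix b b).toEquiv, map_mul' := fun x y => LinearMap.toMatrix_mul b x y, map_add' := fun x y => (LinearMap.toMatrix b b).map_add x y }
  let e2 : Matrix ι ι ℤ ≃ₐ[ℤ] Matrix (Fin (Fintype.card ι)) (Fin (Fintype.card ι)) ℤ :=
    Matrix.reindexAlgEquiv ℤ ℤ (Fintype.equivFin ι)
  let e : (Module.End ℤ M)ˣ ≃* (Matrix (Fin (Fintype.card ι)) (Fin (Fintype.card ι)) ℤ)ˣ :=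
    Units.mapEquiv (e1.toMulEquiv.trans e2.toMulEquiv)
  exact ⟨Fintype.card ι, e.toMonoidHom.comp ρ, e.injective.comp hρ⟩

/-- convert a `GL_n ℤ` representation to an endomorphism representation -/
lemma moduleRep_of_hasIntRep {G : Type*} [Group G] (h : HasIntRep G) :
    ∃ (k : ℕ) (ρ : G →* (Module.End ℤ (Fin k → ℤ))ˣ), Injective ρ := by
  obtain ⟨n, ρ, hρ⟩ := h
  let e : (Matrix (Fin n) (Fin n) ℤ)ˣ ≃* (Module.End ℤ (Fin n → ℤ))ˣ :=
    Units.mapEquiv (Matrix.toLinAlgEquiv').toMulEquiv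
  exact ⟨n, e.toMonoidHom.comp ρ, e.injective.comp hρ⟩

lemma hasIntRep_of_mulEquiv {G G' : Type*} [Group G] [Group G'] (e : G ≃* G')
    (h : HasIntRep G') : HasIntRep G := by
  obtain ⟨n, ρ, hρ⟩ := h
  exact ⟨n, ρ.comp e.toMonoidHom, hρ.comp e.injective⟩

lemma hasIntRep_prod {G₁ G₂ : Type*} [Group G₁] [Group G₂]
    (h₁ : HasIntRep G₁) (h₂ : HasIntRep G₂) : HasIntRep (G₁ × G₂) := by
  obtain ⟨k₁, ρ₁, hρ₁⟩ := moduleRep_of_hasIntRep h₁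
  obtain ⟨k₂, ρ₂, hρ₂⟩ := moduleRep_of_hasIntRep h₂
  exact hasIntRep_of_module ((Fin k₁ → ℤ) × (Fin k₂ → ℤ)) (prodUnitsEndHom ρ₁ ρ₂)
    (prodUnitsEndHom_injective ρ₁ ρ₂ hρ₁ hρ₂)

/-- faithful rep of a finite group by permutation of a basis -/
lemma hasIntRep_of_finite (T : Type) [Group T] [Finite T] : HasIntRep T := by
  classical
  letI : Fintype T := Fintype.ofFinite T
  let u : T → (Module.End ℤ (T → ℤ))ˣ := fun g =>
    { val := LinearMap.funLeft ℤ ℤ (fun x => g⁻¹ * x)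
      inv := LinearMap.funLeft ℤ ℤ (fun x => g * x)
      val_inv := LinearMap.ext fun φ => funext fun x =>
        show φ (g * (g⁻¹ * x)) = φ x by rw [mul_inv_cancel_left]
      inv_val := LinearMap.ext fun φ => funext fun x =>
        show φ (g⁻¹ * (g * x)) = φ x by rw [inv_mul_cancel_left] }
  let ρ : T →* (Module.End ℤ (T → ℤ))ˣ :=
    { toFun := u
      map_one' := by
        ext : 1
        exact LinearMap.ext fun φ => funext fun x =>
          show φ ((1 : T)⁻¹ * x) = φ x by rw [inv_one, one_mul]
      map_mul' := fun g h => by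
        ext : 1
        exact LinearMap.ext fun φ => funext fun x =>
          show φ ((g * h)⁻¹ * x) = φ (h⁻¹ * (g⁻¹ * x)) by rw [mul_inv_rev, mul_assoc] }
  refine hasIntRep_of_module (T → ℤ) ρ ?_
  intro g h hgh
  have hval := congrArg Units.val hgh
  have h2 : (Pi.single (1 : T) (1 : ℤ) : T → ℤ) (g⁻¹ * g)
      = (Pi.single (1 : T) (1 : ℤ) : T → ℤ) (h⁻¹ * g) :=
    congrFun (LinearMap.congr_fun hval (Pi.single (1 : T) (1 : ℤ))) g
  rw [inv_mul_cancel, Pi.single_eq_same] at h2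
  by_contra hne
  rw [Pi.single_eq_of_ne (fun hc : h⁻¹ * g = 1 => hne (by
    have := congrArg (fun z => h * z) hc
    simpa using this))] at h2
  exact one_ne_zero h2





section Shear

variable (P : Type) [AddCommGroup P]

/-- the shear (x, t) ↦ (x + t v, t) -/
def shearMap (v : P) : (P × ℤ) →ₗ[ℤ] (P × ℤ) where
  toFun p := (p.1 + p.2 • v, p.2)
  map_add' p q := by
    ext
    · show p.1 + q.1 + (p.2 + q.2) • v = p.1 + p.2 • v + (q.1 + q.2 • v)
      rw [add_smul]; abel
    · rfl
  map_smul' c p := by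
    ext
    · show c • p.1 + (c * p.2) • v = c • (p.1 + p.2 • v)
      rw [smul_add, mul_smul]
    · rfl

lemma shearMap_add (v w : P) (p : P × ℤ) :
    shearMap P v (shearMap P w p) = shearMap P (v + w) p := by
  ext
  · show p.1 + p.2 • w + p.2 • v = p.1 + p.2 • (v + w)
    rw [smul_add]; abel
  · rfl

/-- the shear representation of `P` on `P × ℤ` -/
def shearUnit (v : P) : (Module.End ℤ (P × ℤ))ˣ where
  val := shearMap P v
  inv := shearMap P (-v)
  val_inv := LinearMap.ext fun p => by
    show shearMap P v (shearMap P (-v) p) = p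
    rw [shearMap_add]
    show (p.1 + p.2 • (v + -v), p.2) = p
    rw [add_neg_cancel, smul_zero, add_zero]
  inv_val := LinearMap.ext fun p => by
    show shearMap P (-v) (shearMap P v p) = p
    rw [shearMap_add]
    show (p.1 + p.2 • (-v + v), p.2) = p
    rw [neg_add_cancel, smul_zero, add_zero]

def shearHom : Multiplicative P →* (Module.End ℤ (P × ℤ))ˣ where
  toFun v := shearUnit P v.toAdd
  map_one' := by
    ext : 1
    exact LinearMap.ext fun p => by
      show (p.1 + p.2 • (0 : P), p.2) = p
      rw [smul_zero, add_zero]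
  map_mul' v w := by
    ext : 1
    exact LinearMap.ext fun p => by
      show shearMap P (v.toAdd + w.toAdd) p = shearMap P v.toAdd (shearMap P w.toAdd p)
      rw [shearMap_add]

lemma shearHom_injective : Injective (shearHom P) := by
  intro v w hvw
  have h2 : (0 : P) + (1 : ℤ) • v.toAdd = (0 : P) + (1 : ℤ) • w.toAdd :=
    congrArg Prod.fst (LinearMap.congr_fun (congrArg Units.val hvw) ((0, 1) : P × ℤ))
  simp only [zero_add, one_smul] at h2
  exact Multiplicative.toAdd.injective h2

end Shear

/-- `Multiplicative (α × β)` splits as a product. -/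
def mulProdEquiv (X Y : Type*) [AddMonoid X] [AddMonoid Y] :
    Multiplicative (X × Y) ≃* Multiplicative X × Multiplicative Y where
  toFun p := (Multiplicative.ofAdd p.toAdd.1, Multiplicative.ofAdd p.toAdd.2)
  invFun p := Multiplicative.ofAdd (p.1.toAdd, p.2.toAdd)
  left_inv _ := rfl
  right_inv _ := rfl
  map_mul' _ _ := rfl


/-- every finitely generated commutative group has a faithful integral representation -/
lemma hasIntRep_of_commGroup (A : Type) [CommGroup A] [Group.FG A] : HasIntRep A := by
  haveI : Module.Finite ℤ (Additive A) := Module.Finite.iff_addGroup_fg.mpr inferInstance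
  obtain ⟨n, ι, hι, p, hp, e, ⟨f⟩⟩ :=
    @Module.equiv_free_prod_directSum ℤ _ _ (Additive A) _ _ _ _
  set Y := DirectSum ι fun i => ℤ ⧸ Submodule.span ℤ {p i ^ e i} with hY
  haveI : Fintype ι := hι
  haveI hfinY : Finite Y := by
    haveI : ∀ i, Finite (ℤ ⧸ Submodule.span ℤ {p i ^ e i}) := by
      intro i
      have hpne : p i ^ e i ≠ 0 := pow_ne_zero _ (hp i).ne_zero
      haveI : NeZero (p i ^ e i).natAbs := ⟨Int.natAbs_ne_zero.mpr hpne⟩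
      exact Finite.of_equiv _ (Int.quotientSpanEquivZMod (p i ^ e i)).toEquiv.symm
    exact Finite.of_equiv _ (DFinsupp.equivFunOnFintype).symm
  have equivA : A ≃* Multiplicative ((Fin n →₀ ℤ) × Y) :=
    (MulEquiv.multiplicativeAdditive A).symm.trans (AddEquiv.toMultiplicative f.toAddEquiv)
  have h1 : HasIntRep (Multiplicative (Fin n →₀ ℤ)) := by
    have efin : Multiplicative (Fin n →₀ ℤ) ≃* Multiplicative (Fin n → ℤ) :=
      AddEquiv.toMultiplicative (Finsupp.linearEquivFunOnFinite ℤ ℤ (Fin n)).toAddEquiv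
    exact hasIntRep_of_mulEquiv efin
      (hasIntRep_of_module ((Fin n → ℤ) × ℤ) (shearHom (Fin n → ℤ)) (shearHom_injective _))
  have h2 : HasIntRep (Multiplicative Y) := by
    haveI : Finite (Multiplicative Y) := Finite.of_equiv Y Multiplicative.ofAdd
    exact hasIntRep_of_finite (Multiplicative Y)
  exact hasIntRep_of_mulEquiv (equivA.trans (mulProdEquiv _ _)) (hasIntRep_prod h1 h2)


section Induced

variable {G : Type} [Group G]

/-- induced representation: faithfulness passes from a finite-index subgroup to the group -/
lemma hasIntRep_of_finiteIndex (H : Subgroup G) [Finite (G ⧸ H)]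
    (hH : HasIntRep H) : HasIntRep G := by
  classical
  obtain ⟨k, ρ₀, hρ₀⟩ := moduleRep_of_hasIntRep hH
  set M : Type := (Fin k → ℤ) × ℤ with hM
  -- pad the representation so that the module is nontrivial
  let ρH : H →* (Module.End ℤ M)ˣ :=
    { toFun := fun h => prodUnitsEnd (ρ₀ h) 1
      map_one' := by
        show prodUnitsEnd (ρ₀ 1) 1 = 1
        rw [map_one, prodUnitsEnd_one]
      map_mul' := fun a b => by
        show prodUnitsEnd (ρ₀ (a * b)) 1 = prodUnitsEnd (ρ₀ a) 1 * prodUnitsEnd (ρ₀ b) 1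
        rw [map_mul]
        conv_lhs => rw [show (1 : (Module.End ℤ ℤ)ˣ) = 1 * 1 by rw [one_mul]]
        rw [prodUnitsEnd_mul] }
  have hρH : Injective ρH := by
    intro a b hab
    apply hρ₀
    apply Units.ext
    apply LinearMap.ext
    intro x
    exact congrArg Prod.fst
      (LinearMap.congr_fun (congrArg Units.val hab) ((x, 0) : M))
  -- the section and the cocycle
  set σ : G ⧸ H → G := Quotient.out with hσdef
  have hσ : ∀ c : G ⧸ H, QuotientGroup.mk (σ c) = c := fun c => Quotient.out_eq c
  have key : ∀ (g : G) (c : G ⧸ H), (σ c)⁻¹ * g * σ (g⁻¹ • c) ∈ H := by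
    intro g c
    have h1 : QuotientGroup.mk (σ c) = (QuotientGroup.mk (g * σ (g⁻¹ • c)) : G ⧸ H) := by
      have h2 : (QuotientGroup.mk (g * σ (g⁻¹ • c)) : G ⧸ H) = g • QuotientGroup.mk (σ (g⁻¹ • c)) := rfl
      rw [hσ, h2, hσ, smul_inv_smul]
    have := QuotientGroup.eq.mp h1.symm
    -- this : (g * σ (g⁻¹ • c))⁻¹ * σ c ∈ H
    have h3 : (σ c)⁻¹ * g * σ (g⁻¹ • c) = ((g * σ (g⁻¹ • c))⁻¹ * σ c)⁻¹ := by group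
    rw [h3]
    exact inv_mem this
  let coc : G → (G ⧸ H) → H := fun g c => ⟨(σ c)⁻¹ * g * σ (g⁻¹ • c), key g c⟩
  have coc_mul : ∀ (g₁ g₂ : G) (c : G ⧸ H), coc (g₁ * g₂) c = coc g₁ c * coc g₂ (g₁⁻¹ • c) := by
    intro g₁ g₂ c
    apply Subtype.ext
    show (σ c)⁻¹ * (g₁ * g₂) * σ ((g₁ * g₂)⁻¹ • c)
      = ((σ c)⁻¹ * g₁ * σ (g₁⁻¹ • c)) * ((σ (g₁⁻¹ • c))⁻¹ * g₂ * σ (g₂⁻¹ • g₁⁻¹ • c))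
    have hs : (g₁ * g₂)⁻¹ • c = g₂⁻¹ • g₁⁻¹ • c := by rw [mul_inv_rev, mul_smul]
    rw [hs]
    group
  have coc_one : ∀ c : G ⧸ H, coc 1 c = 1 := by
    intro c
    apply Subtype.ext
    show (σ c)⁻¹ * 1 * σ ((1 : G)⁻¹ • c) = 1
    rw [inv_one, one_smul, mul_one, inv_mul_cancel]
  -- the induced representation on `(G ⧸ H) → M`
  set V : Type := (G ⧸ H) → M with hV
  let Φ : G → Module.End ℤ V := fun g =>
    { toFun := fun f c => (ρH (coc g c)).val (f (g⁻¹ • c))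
      map_add' := fun f₁ f₂ => funext fun c => by
        show (ρH (coc g c)).val (f₁ (g⁻¹ • c) + f₂ (g⁻¹ • c)) = _
        rw [map_add]
        rfl
      map_smul' := fun r f => funext fun c => by
        show (ρH (coc g c)).val (r • f (g⁻¹ • c)) = _
        rw [map_smul]
        rfl }
  have Φ_apply : ∀ (g : G) (f : V) (c : G ⧸ H), Φ g f c = (ρH (coc g c)).val (f (g⁻¹ • c)) :=
    fun g f c => rfl
  have Φ_mul : ∀ g₁ g₂ : G, Φ (g₁ * g₂) = Φ g₁ * Φ g₂ := by
    intro g₁ g₂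
    apply LinearMap.ext
    intro f
    funext c
    rw [Module.End.mul_apply, Φ_apply, Φ_apply, Φ_apply, coc_mul, map_mul, Units.val_mul,
      Module.End.mul_apply]
    congr 1
    rw [mul_inv_rev, mul_smul]
  have Φ_one : Φ 1 = 1 := by
    apply LinearMap.ext
    intro f
    funext c
    rw [Φ_apply, coc_one, map_one, Units.val_one, Module.End.one_apply, inv_one, one_smul]
    rfl
  let ρ : G →* (Module.End ℤ V)ˣ :=
    { toFun := fun g =>
        ⟨Φ g, Φ g⁻¹, by rw [← Φ_mul, mul_inv_cancel, Φ_one], by rw [← Φ_mul, inv_mul_cancel, Φ_one]⟩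
      map_one' := Units.ext Φ_one
      map_mul' := fun a b => Units.ext (Φ_mul a b) }
  refine hasIntRep_of_module V ρ ?_
  rw [injective_iff_map_eq_one]
  intro g hg
  have hΦ : Φ g = 1 := congrArg Units.val hg
  have hOne : ∀ (f : V) (c : G ⧸ H), (ρH (coc g c)).val (f (g⁻¹ • c)) = f c := by
    intro f c
    have := congrFun (LinearMap.congr_fun hΦ f) c
    rwa [Module.End.one_apply] at this
  set c₀ : G ⧸ H := QuotientGroup.mk 1 with hc₀def
  have hc0 : g⁻¹ • c₀ = c₀ := by
    by_contra hne
    have h5 := hOne (Pi.single c₀ ((0, 1) : M)) c₀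
    rw [Pi.single_eq_same, Pi.single_eq_of_ne (fun h : g⁻¹ • c₀ = c₀ => hne h), map_zero] at h5
    exact one_ne_zero (congrArg Prod.snd h5).symm
  have hval : (ρH (coc g c₀)).val = LinearMap.id := by
    apply LinearMap.ext
    intro v
    have h6 := hOne (Pi.single c₀ v) c₀
    rw [hc0, Pi.single_eq_same] at h6
    exact h6
  have hcoc1 : coc g c₀ = 1 := by
    apply hρH
    apply Units.ext
    rw [map_one, Units.val_one]
    exact hval
  have hgeq : (σ c₀)⁻¹ * g * σ (g⁻¹ • c₀) = 1 := congrArg Subtype.val hcoc1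
  rw [hc0] at hgeq
  have : g = σ c₀ * ((σ c₀)⁻¹ * g * σ c₀) * (σ c₀)⁻¹ := by group
  rw [hgeq] at this
  rw [this]
  group

end Induced


section QuandleMain

open Quandles

variable (Q : Type) [Quandle Q] [Fintype Q]

/-- the canonical map into the enveloping group -/
private def tQ (x : Q) : Rack.EnvelGroup Q := Rack.toEnvelGroup Q x

private lemma tQ_conj (x y : Q) :
    tQ Q (x ◃ y) = tQ Q x * tQ Q y * (tQ Q x)⁻¹ := by
  have h := (Rack.toEnvelGroup Q).map_act (x := x) (y := y)
  rw [Quandle.conj_act_eq_conj] at h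
  exact h

private lemma tQ_pow_conj (x y : Q) (k : ℕ) :
    (tQ Q x) ^ k * tQ Q y * ((tQ Q x) ^ k)⁻¹ = tQ Q ((Rack.act' x ^ k) y) := by
  induction k with
  | zero => simp
  | succ k ih =>
    have hp : Rack.act' x ^ (k + 1) = Rack.act' x * Rack.act' x ^ k := pow_succ' _ _
    rw [hp, Equiv.Perm.mul_apply, Rack.act'_apply, tQ_conj]
    rw [← ih]
    rw [pow_succ' (tQ Q x) k]
    group

private lemma tQ_closure :
    Subgroup.closure (Set.range (tQ Q)) = ⊤ := by
  rw [eq_top_iff]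
  rintro g -
  induction g using Quotient.inductionOn with
  | h a =>
    induction a with
    | unit => exact one_mem _
    | incl x => exact Subgroup.subset_closure ⟨x, rfl⟩
    | mul a b iha ihb => exact mul_mem iha ihb
    | inv a iha => exact inv_mem iha

end QuandleMain

end EnvelRep

open Quandles

/-- the enveloping group of a finite quandle admits a faithful
representation `G(Q) → GL_n(ℤ)` for some `n`. -/
theorem envelGroup_faithful_int_rep (Q : Type) [Quandle Q] [Fintype Q] :
    ∃ (n : ℕ) (ρ : Rack.EnvelGroup Q →* Matrix.GeneralLinearGroup (Fin n) ℤ),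
      Function.Injective ρ := by
  classical
  open EnvelRep in
  have main : EnvelRep.HasIntRep (Rack.EnvelGroup Q) := by
    set m := Nat.card (Equiv.Perm Q) with hm_def
    haveI : Finite (Equiv.Perm Q) := Finite.of_fintype _
    have hm : 0 < m := Nat.card_pos
    have hxm : ∀ x : Q, Rack.act' x ^ m = 1 := fun x => pow_card_eq_one'
    have hstab : ∀ x y : Q,
        (EnvelRep.tQ Q x) ^ m * EnvelRep.tQ Q y * ((EnvelRep.tQ Q x) ^ m)⁻¹
          = EnvelRep.tQ Q y := by
      intro x y
      rw [EnvelRep.tQ_pow_conj, hxm]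
      rfl
    have hcent : ∀ x : Q, (EnvelRep.tQ Q x) ^ m ∈ Subgroup.center (Rack.EnvelGroup Q) := by
      intro x
      have hle : Subgroup.closure (Set.range (EnvelRep.tQ Q))
          ≤ Subgroup.centralizer {(EnvelRep.tQ Q x) ^ m} := by
        rw [Subgroup.closure_le]
        rintro _ ⟨y, rfl⟩
        rw [SetLike.mem_coe, Subgroup.mem_centralizer_iff]
        rintro _ rfl
        calc (EnvelRep.tQ Q x) ^ m * EnvelRep.tQ Q y
            = ((EnvelRep.tQ Q x) ^ m * EnvelRep.tQ Q y * ((EnvelRep.tQ Q x) ^ m)⁻¹)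
              * (EnvelRep.tQ Q x) ^ m := by group
          _ = EnvelRep.tQ Q y * (EnvelRep.tQ Q x) ^ m := by rw [hstab x y]
      rw [EnvelRep.tQ_closure] at hle
      rw [Subgroup.mem_center_iff]
      intro g
      have hg : g ∈ Subgroup.centralizer {(EnvelRep.tQ Q x) ^ m} := hle trivial
      have := Subgroup.mem_centralizer_iff.mp hg ((EnvelRep.tQ Q x) ^ m) rfl
      exact this.symm
    set Z := Subgroup.closure (Set.range fun x : Q => (EnvelRep.tQ Q x) ^ m) with hZ
    have hZle : Z ≤ Subgroup.center (Rack.EnvelGroup Q) := by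
      rw [hZ, Subgroup.closure_le]
      rintro _ ⟨x, rfl⟩
      exact hcent x
    haveI hZnormal : Z.Normal := by
      constructor
      intro n hn g
      have hc := Subgroup.mem_center_iff.mp (hZle hn) g
      have h7 : g * n * g⁻¹ = n := by rw [hc, mul_inv_cancel_right]
      rw [h7]
      exact hn
    letI cg : CommGroup Z :=
      { (inferInstance : Group Z) with
        mul_comm := fun a b => Subtype.ext
          (Subgroup.mem_center_iff.mp (hZle b.2) a.1) }
    have hFG : Z.FG := by
      refine ⟨Finset.univ.image fun x : Q => (EnvelRep.tQ Q x) ^ m, ?_⟩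
      rw [hZ]
      congr 1
      ext g
      simp
    haveI hfg : Group.FG Z := (Group.fg_iff_subgroup_fg Z).mpr hFG
    have hZrep : EnvelRep.HasIntRep Z := EnvelRep.hasIntRep_of_commGroup Z
    haveI hfinq : Finite (Rack.EnvelGroup Q ⧸ Z) := by
      apply EnvelRep.finite_of_conj_closed_gen
        (S := Finset.univ.image fun x : Q =>
          (QuotientGroup.mk (EnvelRep.tQ Q x) : Rack.EnvelGroup Q ⧸ Z)) (m := m) hm
      · have hsurj : Function.Surjective (QuotientGroup.mk' Z) := QuotientGroup.mk'_surjective Z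
        have hmapcl := MonoidHom.map_closure (QuotientGroup.mk' Z) (Set.range (EnvelRep.tQ Q))
        rw [EnvelRep.tQ_closure, Subgroup.map_top_of_surjective _ hsurj] at hmapcl
        have himg : ((Finset.univ.image fun x : Q =>
            (QuotientGroup.mk (EnvelRep.tQ Q x) : Rack.EnvelGroup Q ⧸ Z)) : Set (Rack.EnvelGroup Q ⧸ Z))
            = (QuotientGroup.mk' Z) '' Set.range (EnvelRep.tQ Q) := by
          rw [Finset.coe_image, Finset.coe_univ, Set.image_univ]
          exact Set.range_comp _ _
        rw [himg]
        exact hmapcl.symm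
      · intro a ha b hb
        obtain ⟨x, -, rfl⟩ := Finset.mem_image.mp ha
        obtain ⟨y, -, rfl⟩ := Finset.mem_image.mp hb
        have : (QuotientGroup.mk (EnvelRep.tQ Q x) : Rack.EnvelGroup Q ⧸ Z)
            * QuotientGroup.mk (EnvelRep.tQ Q y)
            * (QuotientGroup.mk (EnvelRep.tQ Q x) : Rack.EnvelGroup Q ⧸ Z)⁻¹
            = QuotientGroup.mk (EnvelRep.tQ Q (x ◃ y)) := by
          rw [EnvelRep.tQ_conj]
          rfl
        rw [this]
        exact Finset.mem_image.mpr ⟨x ◃ y, Finset.mem_univ _, rfl⟩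
      · intro s hs
        obtain ⟨x, -, rfl⟩ := Finset.mem_image.mp hs
        have hpow : (QuotientGroup.mk (EnvelRep.tQ Q x) : Rack.EnvelGroup Q ⧸ Z) ^ m
            = QuotientGroup.mk ((EnvelRep.tQ Q x) ^ m) := by
          rw [← QuotientGroup.mk'_apply, ← map_pow]
          rfl
        rw [hpow, QuotientGroup.eq_one_iff]
        exact Subgroup.subset_closure ⟨x, rfl⟩
    exact EnvelRep.hasIntRep_of_finiteIndex Z hZrep
  exact main
end

section
/- Let Q be a finite injective quandle, i.e. φ_Q : Q → G(Q) is injective. Then there exist n and an injective map ρ : Q → GL_n(ℤ) satisfying ρ(x ▷ y) = ρ(x) ρ(y) ρ(x)⁻¹ for all x, y ∈ Q (an injective linear representation of Q over ℤ). -/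
open Quandles

/-! Auxiliary embeddings into matrix groups. -/

section Gadgets

open Matrix

variable {α β : Type} [Fintype α] [Fintype β] [DecidableEq α] [DecidableEq β]

private lemma permMatrix_mul_rev (σ τ : Equiv.Perm α) :
    (σ * τ).permMatrix ℤ = τ.permMatrix ℤ * σ.permMatrix ℤ := by
  show ((τ.trans σ).toPEquiv).toMatrix = _
  rw [Equiv.toPEquiv_trans, PEquiv.toMatrix_trans]

omit [Fintype α] in
private lemma permMatrix_one : ((1 : Equiv.Perm α)).permMatrix ℤ = 1 := by
  show ((Equiv.refl α).toPEquiv).toMatrix = 1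
  rw [Equiv.toPEquiv_refl, PEquiv.toMatrix_refl]

/-- permutation matrices as a group hom to units of the matrix ring -/
private noncomputable def permGL : Equiv.Perm α →* (Matrix α α ℤ)ˣ where
  toFun σ := ⟨(σ⁻¹).permMatrix ℤ, σ.permMatrix ℤ,
    by rw [← permMatrix_mul_rev, mul_inv_cancel, _root_.permMatrix_one],
    by rw [← permMatrix_mul_rev, inv_mul_cancel, _root_.permMatrix_one]⟩
  map_one' := by
    apply Units.ext
    show ((1 : Equiv.Perm α)⁻¹).permMatrix ℤ = 1
    rw [inv_one, _root_.permMatrix_one]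
  map_mul' σ τ := by
    apply Units.ext
    show ((σ * τ)⁻¹).permMatrix ℤ = (σ⁻¹).permMatrix ℤ * (τ⁻¹).permMatrix ℤ
    rw [_root_.mul_inv_rev, permMatrix_mul_rev]

omit [Fintype α] in
private lemma permMatrix_entry (σ : Equiv.Perm α) (i j : α) :
    σ.permMatrix ℤ i j = if σ i = j then 1 else 0 := by
  simp [Equiv.Perm.permMatrix, PEquiv.toMatrix, Equiv.toPEquiv, Option.mem_def]

private lemma permGL_injective : Function.Injective (permGL (α := α)) := by
  intro σ τ h
  have h2 : (σ⁻¹).permMatrix ℤ = (τ⁻¹).permMatrix ℤ := congrArg Units.val h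
  have h4 : σ⁻¹ = τ⁻¹ := by
    ext i
    have h3 := congrFun (congrFun h2 i) (σ⁻¹ i)
    rw [permMatrix_entry, permMatrix_entry, if_pos rfl] at h3
    by_contra hne
    rw [if_neg (fun hh => hne hh.symm)] at h3
    exact one_ne_zero h3
  simpa using congrArg Inv.inv h4

variable {n : ℕ}

/-- strictly upper row matrix -/
private def eRow (n : ℕ) (v : Fin n →₀ ℤ) : Matrix (Option (Fin n)) (Option (Fin n)) ℤ :=
  Matrix.of fun i j => Option.casesOn i (Option.casesOn j 0 (fun k => v k)) (fun _ => 0)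

private lemma eRow_mul (v w : Fin n →₀ ℤ) : eRow n v * eRow n w = 0 := by
  ext i j
  rw [Matrix.mul_apply]
  apply Finset.sum_eq_zero
  intro k _
  cases i <;> cases k <;> cases j <;> simp [eRow]

private lemma eRow_add (v w : Fin n →₀ ℤ) : eRow n (v + w) = eRow n v + eRow n w := by
  ext i j
  cases i <;> cases j <;> simp [eRow]

private lemma eRow_zero : eRow n 0 = 0 := by
  ext i j
  cases i <;> cases j <;> simp [eRow]

private def uniMat (v : Fin n →₀ ℤ) : Matrix (Option (Fin n)) (Option (Fin n)) ℤ :=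
  1 + eRow n v

private lemma uniMat_mul (v w : Fin n →₀ ℤ) : uniMat v * uniMat w = uniMat (v + w) := by
  unfold uniMat
  simp only [add_mul, mul_add, one_mul, mul_one, eRow_mul, eRow_add]
  abel

private lemma uniMat_zero : uniMat (0 : Fin n →₀ ℤ) = 1 := by
  rw [uniMat, eRow_zero, add_zero]

/-- unipotent representation of the free abelian group -/
private noncomputable def uniGL :
    Multiplicative (Fin n →₀ ℤ) →* (Matrix (Option (Fin n)) (Option (Fin n)) ℤ)ˣ where
  toFun a := ⟨uniMat a.toAdd, uniMat (-a.toAdd),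
    by rw [uniMat_mul, add_neg_cancel, uniMat_zero],
    by rw [uniMat_mul, neg_add_cancel, uniMat_zero]⟩
  map_one' := by
    apply Units.ext
    show uniMat (Multiplicative.toAdd (1 : Multiplicative (Fin n →₀ ℤ))) = 1
    rw [toAdd_one, uniMat_zero]
  map_mul' a b := by
    apply Units.ext
    show uniMat ((a * b).toAdd) = uniMat a.toAdd * uniMat b.toAdd
    rw [toAdd_mul, uniMat_mul]

private lemma uniGL_injective : Function.Injective (uniGL (n := n)) := by
  intro a b h
  have h2 : uniMat a.toAdd = uniMat b.toAdd := congrArg Units.val h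
  have h3 : a.toAdd = b.toAdd := by
    ext k
    have h4 := congrFun (congrFun h2 none) (some k)
    simpa [uniMat, eRow, Matrix.one_apply] using h4
  exact h3

/-- block-diagonal embedding of a product of unit groups -/
private noncomputable def blockGL :
    (Matrix α α ℤ)ˣ × (Matrix β β ℤ)ˣ →* (Matrix (α ⊕ β) (α ⊕ β) ℤ)ˣ where
  toFun P := ⟨Matrix.fromBlocks (P.1 : Matrix α α ℤ) 0 0 (P.2 : Matrix β β ℤ),
    Matrix.fromBlocks ((P.1⁻¹ : (Matrix α α ℤ)ˣ) : Matrix α α ℤ) 0 0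
      ((P.2⁻¹ : (Matrix β β ℤ)ˣ) : Matrix β β ℤ),
    by rw [Matrix.fromBlocks_multiply]; simp [Matrix.fromBlocks_one],
    by rw [Matrix.fromBlocks_multiply]; simp [Matrix.fromBlocks_one]⟩
  map_one' := by
    apply Units.ext
    show Matrix.fromBlocks (1 : Matrix α α ℤ) 0 0 (1 : Matrix β β ℤ) = 1
    exact Matrix.fromBlocks_one
  map_mul' P Q := by
    apply Units.ext
    show Matrix.fromBlocks _ 0 0 _ = Matrix.fromBlocks _ 0 0 _ * Matrix.fromBlocks _ 0 0 _
    rw [Matrix.fromBlocks_multiply]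
    simp

private lemma blockGL_injective : Function.Injective (blockGL (α := α) (β := β)) := by
  intro P Q h
  have h2 : Matrix.fromBlocks (P.1 : Matrix α α ℤ) 0 0 (P.2 : Matrix β β ℤ)
      = Matrix.fromBlocks (Q.1 : Matrix α α ℤ) 0 0 (Q.2 : Matrix β β ℤ) := congrArg Units.val h
  have h11 := congrArg Matrix.toBlocks₁₁ h2
  have h22 := congrArg Matrix.toBlocks₂₂ h2
  rw [Matrix.toBlocks_fromBlocks₁₁, Matrix.toBlocks_fromBlocks₁₁] at h11
  rw [Matrix.toBlocks_fromBlocks₂₂, Matrix.toBlocks_fromBlocks₂₂] at h22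
  exact Prod.ext (Units.ext h11) (Units.ext h22)

private lemma cayley_injective (F : Type) [Group F] :
    Function.Injective (MulAction.toPermHom F F) := by
  intro a b h
  have h2 : a • (1 : F) = b • (1 : F) := by
    have := congrArg (fun (σ : Equiv.Perm F) => σ 1) h
    simpa [MulAction.toPermHom] using this
  simpa using h2

end Gadgets

/-! A finitely generated group which is finite-by-center embeds into `GL_m(ℤ)`. -/

private theorem group_embed (G : Type) [Group G] [Group.FG G]
    {P : Type} [Group P] [Finite P] (π : G →* P)
    (hc : π.ker ≤ Subgroup.center G) :
    ∃ (m : ℕ) (Θ : G →* (Matrix (Fin m) (Fin m) ℤ)ˣ), Function.Injective Θ := by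
  classical
  haveI : Finite (G ⧸ π.ker) :=
    Finite.of_equiv _ (QuotientGroup.quotientKerEquivRange π).symm.toEquiv
  haveI : π.ker.FiniteIndex := Subgroup.finiteIndex_of_finite_quotient
  haveI hZfi : (Subgroup.center G).FiniteIndex := Subgroup.finiteIndex_of_le hc
  haveI : Group.FG ↥(Subgroup.center G) := Subgroup.fg_of_index_ne_zero _
  letI : CommGroup ↥(Subgroup.center G) :=
    { (inferInstance : Group ↥(Subgroup.center G)) with
      mul_comm := fun a b => Subtype.ext (Subgroup.mem_center_iff.mp b.2 a) }
  obtain ⟨r, ι, fι, p, hp, e, ⟨σ⟩⟩ :=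
    AddCommGroup.equiv_free_prod_directSum_zmod (Additive ↥(Subgroup.center G))
  haveI : ∀ i, NeZero (p i ^ e i) := fun i => ⟨pow_ne_zero _ (hp i).ne_zero⟩
  haveI : Finite (DirectSum ι fun i => ZMod (p i ^ e i)) :=
    Finite.of_equiv _ (DFinsupp.equivFunOnFintype (ι := ι)).symm
  -- the two coordinate homs on the center
  let fr : ↥(Subgroup.center G) →* Multiplicative (Fin r →₀ ℤ) :=
    AddMonoidHom.toMultiplicativeRight ((AddMonoidHom.fst _ _).comp σ.toAddMonoidHom)
  let tor : ↥(Subgroup.center G) →* Multiplicative (DirectSum ι fun i => ZMod (p i ^ e i)) :=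
    AddMonoidHom.toMultiplicativeRight ((AddMonoidHom.snd _ _).comp σ.toAddMonoidHom)
  -- the finite-index normal subgroup killing only torsion-free data
  let H : Subgroup G := tor.ker.map (Subgroup.center G).subtype
  have hHle : H ≤ Subgroup.center G := Subgroup.map_subtype_le _
  haveI hHnormal : H.Normal := by
    constructor
    intro h hh g
    have hcen : h ∈ Subgroup.center G := hHle hh
    have : g * h * g⁻¹ = h := by
      rw [Subgroup.mem_center_iff.mp hcen g]
      group
    rwa [this]
  haveI hHfi : H.FiniteIndex := by
    haveI : Finite (↥(Subgroup.center G) ⧸ tor.ker) :=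
      Finite.of_equiv _ (QuotientGroup.quotientKerEquivRange tor).symm.toEquiv
    haveI : tor.ker.FiniteIndex := Subgroup.finiteIndex_of_finite_quotient
    have h1 : H.subgroupOf (Subgroup.center G) = tor.ker :=
      Subgroup.comap_map_eq_self_of_injective (Subgroup.subtype_injective _) _
    have h2 : H.relIndex (Subgroup.center G) = tor.ker.index := congrArg Subgroup.index h1
    constructor
    rw [← Subgroup.relIndex_mul_index hHle, h2]
    exact Nat.mul_ne_zero Subgroup.FiniteIndex.index_ne_zero Subgroup.FiniteIndex.index_ne_zero
  haveI hGHfin : Finite (G ⧸ H) := Nat.finite_of_card_ne_zero hHfi.index_ne_zero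
  -- the transfer homomorphism
  let τt : G →* ↥(Subgroup.center G) := MonoidHom.transferCenterPow G
  -- combined homomorphism
  let ψ1 : G →* P × (G ⧸ H) := π.prod (QuotientGroup.mk' H)
  let ψ2 : G →* Multiplicative (Fin r →₀ ℤ) := fr.comp τt
  let Φ : G →* (P × (G ⧸ H)) × Multiplicative (Fin r →₀ ℤ) := ψ1.prod ψ2
  have hΦinj : Function.Injective Φ := by
    rw [injective_iff_map_eq_one]
    intro g hg
    have hπg : π g = 1 := congrArg (fun t => t.1.1) hg
    have hqg : QuotientGroup.mk' H g = 1 := congrArg (fun t => t.1.2) hg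
    have hfrg : fr (τt g) = 1 := congrArg (fun t => t.2) hg
    have hgZ : g ∈ Subgroup.center G := hc (MonoidHom.mem_ker.mpr hπg)
    set z : ↥(Subgroup.center G) := ⟨g, hgZ⟩ with hz
    have hτ : τt g = z ^ (Subgroup.center G).index := by
      apply Subtype.ext
      rw [MonoidHom.transferCenterPow_apply]
      simp [hz]
    have hfrN : (fr z) ^ (Subgroup.center G).index = 1 := by
      rw [← map_pow, ← hτ]
      exact hfrg
    have hNne : (Subgroup.center G).index ≠ 0 := hZfi.index_ne_zero
    have hfrz : Multiplicative.toAdd (fr z) = 0 := by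
      have h5 := congrArg Multiplicative.toAdd hfrN
      rw [toAdd_pow, toAdd_one] at h5
      ext k
      have h6 := congrArg (fun f => f k) h5
      simp only [Finsupp.smul_apply, Finsupp.coe_zero, Pi.zero_apply, smul_eq_mul] at h6
      have h7 : ((Subgroup.center G).index : ℤ) * (Multiplicative.toAdd (fr z)) k = 0 := by
        rw [← h6]
        simp [nsmul_eq_mul]
      rcases mul_eq_zero.mp h7 with h8 | h8
      · exact absurd (Int.natCast_eq_zero.mp h8) hNne
      · simpa using h8
    have hHg : g ∈ H := (QuotientGroup.eq_one_iff g).mp hqg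
    obtain ⟨w, hw, hwg⟩ := hHg
    have hwz : w = z := Subtype.ext hwg
    have htorz : Multiplicative.toAdd (tor z) = 0 := by
      rw [← hwz]
      have hw' : tor w = 1 := hw
      rw [hw']
      rfl
    have hσz : σ (Additive.ofMul z) = 0 := by
      have hfst : (σ (Additive.ofMul z)).1 = 0 := hfrz
      have hsnd : (σ (Additive.ofMul z)).2 = 0 := htorz
      exact Prod.ext hfst hsnd
    have hz1 : z = 1 := by
      have h9 : Additive.ofMul z = 0 := by
        apply σ.injective
        rw [hσz, map_zero]
      exact h9
    have : g = ((1 : ↥(Subgroup.center G)) : G) := by rw [← hz1]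
    simpa using this
  -- final assembly
  haveI : Fintype (P × (G ⧸ H)) := Fintype.ofFinite _
  let mE := Units.mapEquiv
    ((Matrix.reindexAlgEquiv ℤ ℤ
      (Fintype.equivFin ((P × (G ⧸ H)) ⊕ Option (Fin r)))).toRingEquiv.toMulEquiv)
  let Θ := mE.toMonoidHom.comp (blockGL.comp
    ((permGL.comp ((MulAction.toPermHom (P × (G ⧸ H)) (P × (G ⧸ H))).comp ψ1)).prod
      (uniGL.comp ψ2)))
  refine ⟨_, Θ, ?_⟩
  intro a b hab
  have h1 : blockGL (permGL ((MulAction.toPermHom (P × (G ⧸ H)) (P × (G ⧸ H))) (ψ1 a)),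
        uniGL (ψ2 a))
      = blockGL (permGL ((MulAction.toPermHom (P × (G ⧸ H)) (P × (G ⧸ H))) (ψ1 b)),
        uniGL (ψ2 b)) := mE.injective hab
  have h2 := blockGL_injective h1
  have h3 : ψ1 a = ψ1 b :=
    cayley_injective _ (permGL_injective (congrArg Prod.fst h2))
  have h4 : ψ2 a = ψ2 b := uniGL_injective (congrArg Prod.snd h2)
  exact hΦinj (Prod.ext h3 h4)

/-! The quandle part. -/

section Envel

variable (Q : Type) [Quandle Q]

private abbrev φq : Q → Rack.EnvelGroup Q := fun x => Rack.toEnvelGroup Q x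

private lemma closure_range_top :
    Subgroup.closure (Set.range (φq Q)) = ⊤ := by
  rw [eq_top_iff]
  intro g _
  induction g using Quotient.inductionOn with
  | h a =>
    induction a with
    | unit => exact Subgroup.one_mem _
    | incl x => exact Subgroup.subset_closure ⟨x, rfl⟩
    | mul a b ha hb => exact Subgroup.mul_mem _ (ha trivial) (hb trivial)
    | inv a ha => exact Subgroup.inv_mem _ (ha trivial)

private lemma conj_formula :
    ∀ (g : Rack.EnvelGroup Q) (x : Q),
      g * φq Q x * g⁻¹ = φq Q (Rack.envelAction g x) := by
  have keymul : ∀ (A B : Rack.EnvelGroup Q),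
      (∀ y, A * φq Q y * A⁻¹ = φq Q (Rack.envelAction A y)) →
      (∀ y, B * φq Q y * B⁻¹ = φq Q (Rack.envelAction B y)) →
      ∀ y, (A * B) * φq Q y * (A * B)⁻¹ = φq Q (Rack.envelAction (A * B) y) := by
    intro A B hA hB y
    have h1 : (A * B) * φq Q y * (A * B)⁻¹ = A * (B * φq Q y * B⁻¹) * A⁻¹ := by group
    rw [h1, hB, hA, map_mul]
    rfl
  have keyinv : ∀ (A : Rack.EnvelGroup Q),
      (∀ y, A * φq Q y * A⁻¹ = φq Q (Rack.envelAction A y)) →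
      ∀ y, A⁻¹ * φq Q y * A⁻¹⁻¹ = φq Q (Rack.envelAction A⁻¹ y) := by
    intro A hA y
    have h2 : Rack.envelAction A (Rack.envelAction A⁻¹ y) = y := by
      rw [← Equiv.Perm.mul_apply, ← map_mul, mul_inv_cancel, map_one, Equiv.Perm.one_apply]
    have h1 := hA (Rack.envelAction A⁻¹ y)
    rw [h2] at h1
    rw [← h1]
    group
  intro g
  induction g using Quotient.inductionOn with
  | h a =>
    induction a with
    | unit =>
      intro x
      show 1 * φq Q x * 1⁻¹ = φq Q (Rack.envelAction 1 x)
      simp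
    | incl y =>
      intro x
      exact (ShelfHom.map_act (Rack.toEnvelGroup Q) (x := y) (y := x)).symm
    | mul a b ha hb => exact keymul ⟦a⟧ ⟦b⟧ ha hb
    | inv a ha => exact keyinv ⟦a⟧ ha

private lemma ker_le_center :
    (Rack.envelAction (R := Q)).ker ≤ Subgroup.center (Rack.EnvelGroup Q) := by
  intro k hk
  rw [Subgroup.mem_center_iff]
  have hφ : ∀ x : Q, k * φq Q x = φq Q x * k := by
    intro x
    have h := conj_formula Q k x
    rw [MonoidHom.mem_ker.mp hk, Equiv.Perm.one_apply] at h
    calc k * φq Q x = k * φq Q x * k⁻¹ * k := by group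
      _ = φq Q x * k := by rw [h]
  intro g
  have hg : g ∈ Subgroup.closure (Set.range (φq Q)) := by
    rw [closure_range_top]; trivial
  induction hg using Subgroup.closure_induction with
  | mem x hx => obtain ⟨y, rfl⟩ := hx; exact (hφ y).symm
  | one => rw [one_mul, mul_one]
  | mul x y hx hy ihx ihy => rw [mul_assoc, ihy, ← mul_assoc, ihx, mul_assoc]
  | inv x hx ihx =>
    calc x⁻¹ * k = x⁻¹ * k * x * x⁻¹ := by group
      _ = x⁻¹ * (x * k) * x⁻¹ := by rw [mul_assoc x⁻¹ k x, ← ihx]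
      _ = k * x⁻¹ := by group

end Envel

/-- a finite injective quandle admits an injective linear representation
`ρ : Q → GL_n(ℤ)` over `ℤ`, i.e. an injective map with
`ρ (x ◃ y) = ρ x * ρ y * (ρ x)⁻¹`. -/
theorem finite_injective_quandle_faithful_int_rep (Q : Type) [Quandle Q] [Fintype Q]
    (hinj : Function.Injective (Rack.toEnvelGroup Q)) :
    ∃ (n : ℕ) (ρ : Q → Matrix.GeneralLinearGroup (Fin n) ℤ),
      Function.Injective ρ ∧ ∀ x y : Q, ρ (x ◃ y) = ρ x * ρ y * (ρ x)⁻¹ := by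
  classical
  haveI : Group.FG (Rack.EnvelGroup Q) :=
    Group.fg_iff.mpr ⟨Set.range (φq Q), closure_range_top Q, Set.finite_range _⟩
  obtain ⟨m, Θ, hΘ⟩ := group_embed (Rack.EnvelGroup Q) (Rack.envelAction (R := Q))
    (ker_le_center Q)
  refine ⟨m, fun x => Θ (φq Q x), hΘ.comp hinj, ?_⟩
  intro x y
  have hact : φq Q (x ◃ y) = φq Q x * φq Q y * (φq Q x)⁻¹ :=
    ShelfHom.map_act (Rack.toEnvelGroup Q) (x := x) (y := y)
  show Θ (φq Q (x ◃ y)) = Θ (φq Q x) * Θ (φq Q y) * (Θ (φq Q x))⁻¹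
  rw [hact, map_mul, map_mul, map_inv]
end

section
/- Let Q be a finite injective quandle, i.e. φ_Q : Q → G(Q) is injective. Then there exist a finite group G and an injective quandle morphism from Q to Conj(G); that is, Q is a subquandle (for conjugation) of a finite group. -/
open Quandles

section SepLemma

/-- Separation lemma: in a f.g. commutative group, any finite set of non-identity
elements can be separated from 1 by a homomorphism to a finite group. -/
private lemma sep_lemma {A : Type*} [CommGroup A] [Group.FG A] (S : Set A) (hS : S.Finite)
    (h1 : (1 : A) ∉ S) :
    ∃ (B : Type) (_ : Group B) (_ : Finite B) (χ : A →* B), ∀ s ∈ S, χ s ≠ 1 := by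
  classical
  haveI : AddGroup.FG (Additive A) := GroupFG.iff_add_fg.mp ‹_›
  obtain ⟨n, ι, fι, p, hp, e, ⟨eq⟩⟩ :=
    AddCommGroup.equiv_free_prod_directSum_zmod (Additive A)
  haveI : ∀ i, NeZero (p i ^ e i) := fun i => ⟨pow_ne_zero _ (hp i).ne_zero⟩
  set T := DirectSum ι (fun i => ZMod (p i ^ e i)) with hT
  haveI : Finite T := Finite.of_equiv _ (DFinsupp.equivFunOnFintype (ι := ι)).symm
  set m : ℕ := 1 + hS.toFinset.sup
      (fun s => (eq (Additive.ofMul s)).1.support.sup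
        (fun j => ((eq (Additive.ofMul s)).1 j).natAbs)) with hm
  haveI : NeZero m := ⟨by omega⟩
  -- the reduction map on the free part
  let ρ : (Fin n →₀ ℤ) →+ (Fin n → ZMod m) :=
    AddMonoidHom.mk' (fun v j => ((v j : ℤ) : ZMod m)) (by
      intro a b; funext j; simp)
  let χ₀ : ((Fin n →₀ ℤ) × T) →+ ((Fin n → ZMod m) × T) :=
    AddMonoidHom.prodMap ρ (AddMonoidHom.id T)
  let χA : Additive A →+ ((Fin n → ZMod m) × T) := χ₀.comp eq.toAddMonoidHom
  refine ⟨Multiplicative ((Fin n → ZMod m) × T), inferInstance, inferInstance,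
    AddMonoidHom.toMultiplicativeRight χA, ?_⟩
  intro s hs hcontra
  have h0 : χA (Additive.ofMul s) = 0 := hcontra
  have hsne : eq (Additive.ofMul s) ≠ 0 := by
    intro h
    apply h1
    have : Additive.ofMul s = 0 := by
      apply eq.injective; simpa using h
    have : s = 1 := this
    rwa [← this]
  have hsnd : (eq (Additive.ofMul s)).2 = 0 := congrArg Prod.snd h0
  have hfst : (eq (Additive.ofMul s)).1 ≠ 0 := by
    intro h; exact hsne (Prod.ext h hsnd)
  obtain ⟨j, hj⟩ : ∃ j, (eq (Additive.ofMul s)).1 j ≠ 0 := by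
    by_contra h
    push_neg at h
    exact hfst (Finsupp.ext h)
  have hcast : (((eq (Additive.ofMul s)).1 j : ℤ) : ZMod m) = 0 := by
    have := congrArg Prod.fst h0
    exact congrFun this j
  have hdvd : (m : ℤ) ∣ (eq (Additive.ofMul s)).1 j :=
    (ZMod.intCast_zmod_eq_zero_iff_dvd _ m).mp hcast
  have hdvd' : m ∣ ((eq (Additive.ofMul s)).1 j).natAbs := Int.natCast_dvd_natCast.mp
    (by simpa using Int.dvd_natAbs.mpr hdvd)
  have hle : m ≤ ((eq (Additive.ofMul s)).1 j).natAbs :=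
    Nat.le_of_dvd (Int.natAbs_pos.mpr hj) hdvd'
  have hlt : ((eq (Additive.ofMul s)).1 j).natAbs < m := by
    have h₁ : ((eq (Additive.ofMul s)).1 j).natAbs ≤
        (eq (Additive.ofMul s)).1.support.sup
          (fun j => ((eq (Additive.ofMul s)).1 j).natAbs) :=
      Finset.le_sup (f := fun j => ((eq (Additive.ofMul s)).1 j).natAbs)
        (Finsupp.mem_support_iff.mpr hj)
    have h₂ := Finset.le_sup (f := fun s => (eq (Additive.ofMul s)).1.support.sup
        (fun j => ((eq (Additive.ofMul s)).1 j).natAbs)) (hS.mem_toFinset.mpr hs)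
    omega
  omega

end SepLemma

section Envel
variable (Q : Type) [Quandle Q]

open Rack

private def emk : PreEnvelGroup Q → EnvelGroup Q := fun a => ⟦a⟧

private lemma emk_mul (a b : PreEnvelGroup Q) : emk Q (a.mul b) = emk Q a * emk Q b := rfl

private lemma emk_inv (a : PreEnvelGroup Q) : emk Q a.inv = (emk Q a)⁻¹ := rfl

private lemma emk_unit : emk Q PreEnvelGroup.unit = 1 := rfl

private lemma emk_incl (x : Q) : emk Q (PreEnvelGroup.incl x) = toEnvelGroup Q x := rfl

private lemma envel_conj_s10 (x y : Q) :
    toEnvelGroup Q (x ◃ y) =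
      toEnvelGroup Q x * toEnvelGroup Q y * (toEnvelGroup Q x)⁻¹ := by
  have := (toEnvelGroup Q).map_act (x := x) (y := y)
  rwa [Quandle.conj_act_eq_conj] at this

private lemma envel_closure :
    Subgroup.closure (Set.range (toEnvelGroup Q : Q → EnvelGroup Q)) = ⊤ := by
  rw [eq_top_iff]
  have aux : ∀ a : PreEnvelGroup Q,
      emk Q a ∈ Subgroup.closure (Set.range (toEnvelGroup Q : Q → EnvelGroup Q)) := by
    intro a
    induction a with
    | unit => rw [emk_unit]; exact Subgroup.one_mem _
    | incl x => rw [emk_incl]; exact Subgroup.subset_closure ⟨x, rfl⟩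
    | mul a b iha ihb => rw [emk_mul]; exact Subgroup.mul_mem _ iha ihb
    | inv a iha => rw [emk_inv]; exact Subgroup.inv_mem _ iha
  intro g _
  exact Quotient.inductionOn g fun a => aux a

private lemma envel_conj_action (g : EnvelGroup Q) (x : Q) :
    g * toEnvelGroup Q x * g⁻¹ = toEnvelGroup Q (envelAction g x) := by
  have aux : ∀ (a : PreEnvelGroup Q) (x : Q),
      emk Q a * toEnvelGroup Q x * (emk Q a)⁻¹ = toEnvelGroup Q (envelAction (emk Q a) x) := by
    intro a
    induction a with
    | unit =>
      intro x
      rw [emk_unit]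
      simp
    | incl y =>
      intro x
      rw [emk_incl, envelAction_prop, envel_conj_s10]
    | mul a b iha ihb =>
      intro x
      rw [emk_mul, map_mul]
      have h : emk Q a * emk Q b * toEnvelGroup Q x * (emk Q a * emk Q b)⁻¹
          = emk Q a * (emk Q b * toEnvelGroup Q x * (emk Q b)⁻¹) * (emk Q a)⁻¹ := by
        group
      rw [h, ihb, iha, Equiv.Perm.mul_apply]
    | inv a iha =>
      intro x
      rw [emk_inv, map_inv]
      have h := iha ((envelAction (emk Q a))⁻¹ x)
      rw [← Equiv.Perm.mul_apply, mul_inv_cancel, Equiv.Perm.one_apply] at h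
      rw [← h]
      group
  exact Quotient.inductionOn g (fun a => aux a x)

end Envel

/-- a finite injective quandle is a subquandle (for conjugation) of a
finite group: there are a finite group `G` and an injective quandle morphism
`Q → Conj G`. -/
theorem finite_injective_quandle_embeds_in_finite_group (Q : Type) [Quandle Q] [Fintype Q]
    (hinj : Function.Injective (Rack.toEnvelGroup Q)) :
    ∃ (G : Type) (_ : Group G) (_ : Fintype G) (f : Q → G),
      Function.Injective f ∧ ∀ x y : Q, f (x ◃ y) = f x * f y * (f x)⁻¹ := by
  classical
  set E := Rack.EnvelGroup Q with hE
  let φ : Q → E := fun x => Rack.toEnvelGroup Q x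
  let π : E →* (Q ≃ Q) := Rack.envelAction
  -- the kernel of the action is central
  have hker_center : π.ker ≤ Subgroup.center E := by
    intro k hk
    have hcomm : ∀ x : Q, φ x * k = k * φ x := by
      intro x
      have h := envel_conj_action Q k x
      rw [show Rack.envelAction k = 1 from MonoidHom.mem_ker.mp hk] at h
      rw [Equiv.Perm.one_apply] at h
      have : k * φ x = φ x * k := by
        have := h
        calc k * φ x = (k * φ x * k⁻¹) * k := by group
        _ = φ x * k := by rw [this]
      exact this.symm
    rw [Subgroup.mem_center_iff]
    intro g
    have hle : Subgroup.closure (Set.range (Rack.toEnvelGroup Q : Q → E)) ≤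
        Subgroup.centralizer {k} := by
      rw [Subgroup.closure_le]
      rintro _ ⟨x, rfl⟩
      rw [SetLike.mem_coe, Subgroup.mem_centralizer_iff]
      intro h hh
      rw [Set.mem_singleton_iff] at hh
      subst hh
      exact (hcomm x).symm
    rw [envel_closure] at hle
    have hg : g ∈ Subgroup.centralizer {k} := hle (Subgroup.mem_top g)
    rw [Subgroup.mem_centralizer_iff] at hg
    exact (hg k rfl).symm
  haveI : Finite (Q ≃ Q) := by infer_instance
  haveI : π.ker.FiniteIndex := by infer_instance
  haveI : (Subgroup.center E).FiniteIndex := Subgroup.finiteIndex_of_le hker_center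
  haveI : Group.FG E :=
    Group.fg_iff.mpr ⟨Set.range (Rack.toEnvelGroup Q), envel_closure Q, Set.finite_range _⟩
  haveI : Group.FG ↥(Subgroup.center E) := by infer_instance
  -- the set of central differences of distinct elements of `Q`
  set S : Set ↥(Subgroup.center E) :=
    {z | ∃ x y : Q, x ≠ y ∧ (z : E) = (φ x)⁻¹ * φ y} with hS
  have hSfin : S.Finite := by
    have hsub : S ⊆ (Subtype.val) ⁻¹' (Set.range fun p : Q × Q => (φ p.1)⁻¹ * φ p.2) := by
      rintro z ⟨x, y, _, h⟩
      exact ⟨(x, y), h.symm⟩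
    exact Set.Finite.subset
      (Set.Finite.preimage (Set.injOn_of_injective Subtype.val_injective)
        (Set.finite_range _)) hsub
  have h1S : (1 : ↥(Subgroup.center E)) ∉ S := by
    rintro ⟨x, y, hxy, h⟩
    rw [OneMemClass.coe_one] at h
    exact hxy (hinj (by rw [eq_comm, inv_mul_eq_one] at h; exact h))
  open scoped IsMulCommutative in
  obtain ⟨B, hBgrp, hBfin, χ, hχ⟩ := sep_lemma S hSfin h1S
  set N : Subgroup E := χ.ker.map (Subgroup.center E).subtype with hN
  have hNle : N ≤ Subgroup.center E := Subgroup.map_subtype_le _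
  haveI hNnormal : N.Normal := by
    constructor
    intro n hn g
    have hcen : g * n * g⁻¹ = n := by
      rw [Subgroup.mem_center_iff.mp (hNle hn) g, mul_assoc, mul_inv_cancel, mul_one]
    rwa [hcen]
  haveI : Finite ↥χ.range := by infer_instance
  haveI : χ.ker.FiniteIndex := by infer_instance
  haveI hNfi : N.FiniteIndex := by
    constructor
    have h1 : N.relIndex (Subgroup.center E) * (Subgroup.center E).index = N.index :=
      Subgroup.relIndex_mul_index hNle
    have h2 : N.relIndex (Subgroup.center E) = χ.ker.index := by
      unfold Subgroup.relIndex
      congr 1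
      exact Subgroup.comap_map_eq_self_of_injective (Subgroup.subtype_injective _) _
    rw [← h1, h2]
    exact mul_ne_zero Subgroup.FiniteIndex.index_ne_zero Subgroup.FiniteIndex.index_ne_zero
  refine ⟨E ⧸ N, inferInstance, Fintype.ofFinite _,
    fun x => QuotientGroup.mk (φ x), ?_, ?_⟩
  · intro x y h
    by_contra hxy
    have hmem : (φ x)⁻¹ * φ y ∈ N := (QuotientGroup.eq).mp h
    obtain ⟨z, hz, hzeq⟩ := hmem
    have hzS : z ∈ S := ⟨x, y, hxy, by rw [← hzeq]; rfl⟩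
    exact hχ z hzS (MonoidHom.mem_ker.mp hz)
  · intro x y
    have h := envel_conj_s10 Q x y
    show QuotientGroup.mk (φ (x ◃ y)) = _
    rw [show φ (x ◃ y) = φ x * φ y * (φ x)⁻¹ from h]
    rw [QuotientGroup.mk_mul, QuotientGroup.mk_mul, QuotientGroup.mk_inv]
end

section
/- Let G be a countable group whose center has finite index in G. Then every irreducible representation of G on a complex vector space V (V ≠ 0 and the only ρ(G)-invariant subspaces of V are 0 and V) is finite dimensional. -/
open Polynomial

/-- If every `T - μ` is injective, then `aeval T q` is injective for every nonzero
polynomial `q` over `ℂ`. -/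
lemma aeval_injective_of_forall_sub_injective
    {V : Type} [AddCommGroup V] [Module ℂ V] (T : Module.End ℂ V)
    (hinj : ∀ μ : ℂ, Function.Injective (T - algebraMap ℂ (Module.End ℂ V) μ)) :
    ∀ (n : ℕ) (q : ℂ[X]), q ≠ 0 → q.natDegree = n →
      Function.Injective (Polynomial.aeval T q) := by
  intro n
  induction n using Nat.strong_induction_on with
  | _ n ih =>
    intro q hq hdeg
    rcases eq_or_ne n 0 with rfl | hn
    · obtain ⟨a, rfl⟩ := Polynomial.natDegree_eq_zero.mp hdeg
      have ha : a ≠ 0 := fun h => hq (by simp [h])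
      intro x y hxy
      simp only [Polynomial.aeval_C, Module.algebraMap_end_apply] at hxy
      exact smul_right_injective V ha hxy
    · have hdpos : 0 < q.degree := Polynomial.natDegree_pos_iff_degree_pos.mp (by omega)
      obtain ⟨r, hr⟩ := Complex.exists_root hdpos
      obtain ⟨q₂, rfl⟩ := Polynomial.dvd_iff_isRoot.mpr hr
      have hq₂ : q₂ ≠ 0 := fun h => hq (by simp [h])
      have hXC : (X - C r : ℂ[X]) ≠ 0 := Polynomial.X_sub_C_ne_zero r
      have hnd : q₂.natDegree < n := by
        have h := Polynomial.natDegree_mul hXC hq₂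
        rw [Polynomial.natDegree_X_sub_C] at h
        omega
      have hA : Function.Injective (Polynomial.aeval T (X - C r : ℂ[X])) := by
        have h : Polynomial.aeval T (X - C r : ℂ[X]) = T - algebraMap ℂ (Module.End ℂ V) r := by
          simp [map_sub]
        rw [h]; exact hinj r
      have hB := ih _ hnd q₂ hq₂ rfl
      intro x y hxy
      rw [map_mul] at hxy
      simp only [Module.End.mul_apply] at hxy
      exact hB (hA hxy)

/-- if `G` is a countable group whose center has finite index, then every
irreducible representation of `G` on a complex vector space is finite dimensional. -/
theorem irreducible_rep_finiteDimensional_of_center_finiteIndex (G : Type) [Group G]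
    [Countable G] (hZ : (Subgroup.center G).FiniteIndex)
    (V : Type) [AddCommGroup V] [Module ℂ V] [Nontrivial V]
    (ρ : G →* (V ≃ₗ[ℂ] V))
    (hirr : ∀ W : Submodule ℂ V, (∀ (g : G) (v : V), v ∈ W → ρ g v ∈ W) → W = ⊥ ∨ W = ⊤) :
    FiniteDimensional ℂ V := by
  classical
  obtain ⟨v, hv⟩ := exists_ne (0 : V)
  -- spans of sets closed under the action (inside the span) are invariant
  have span_inv : ∀ (S : Set V), (∀ g : G, ∀ x ∈ S, ρ g x ∈ Submodule.span ℂ S) →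
      ∀ (g : G) (x : V), x ∈ Submodule.span ℂ S → ρ g x ∈ Submodule.span ℂ S := by
    intro S hS g x hx
    have h : Submodule.map ((ρ g : V ≃ₗ[ℂ] V) : V →ₗ[ℂ] V) (Submodule.span ℂ S) ≤
        Submodule.span ℂ S := by
      rw [Submodule.map_span, Submodule.span_le]
      rintro _ ⟨y, hy, rfl⟩
      exact hS g y hy
    exact h ⟨x, hx, rfl⟩
  have mul_apply : ∀ (a b : G) (x : V), ρ (a * b) x = ρ a (ρ b x) := by
    intro a b x
    rw [map_mul]
    rfl
  -- the orbit of a nonzero vector spans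
  have horb : Submodule.span ℂ (Set.range fun g : G => ρ g v) = ⊤ := by
    have hcl : ∀ g : G, ∀ x ∈ (Set.range fun g : G => ρ g v),
        ρ g x ∈ Submodule.span ℂ (Set.range fun g : G => ρ g v) := by
      rintro g _ ⟨g', rfl⟩
      exact Submodule.subset_span ⟨g * g', mul_apply g g' v⟩
    rcases hirr _ (span_inv _ hcl) with h | h
    · exfalso
      apply hv
      have hvmem : v ∈ Submodule.span ℂ (Set.range fun g : G => ρ g v) :=
        Submodule.subset_span ⟨1, by simp⟩
      rw [h] at hvmem
      simpa using hvmem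
    · exact h
  -- hence `V` has countable rank
  have hrank : Module.rank ℂ V ≤ Cardinal.aleph0 := by
    rw [← rank_top ℂ V, ← horb]
    exact (rank_span_le _).trans ((Set.countable_range _).le_aleph0)
  -- Dixmier's lemma: commuting endomorphisms are scalars
  have key : ∀ T : V →ₗ[ℂ] V, (∀ (g : G) (x : V), T (ρ g x) = ρ g (T x)) →
      ∃ c : ℂ, T = algebraMap ℂ (Module.End ℂ V) c := by
    intro T hT
    by_contra hc
    push_neg at hc
    have hinj : ∀ μ : ℂ, Function.Injective (T - algebraMap ℂ (Module.End ℂ V) μ) := by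
      intro μ
      set L := T - algebraMap ℂ (Module.End ℂ V) μ with hL
      have hLne : L ≠ 0 := by
        intro h
        exact hc μ (by rwa [sub_eq_zero] at h)
      have hcomm : ∀ (g : G) (x : V), L (ρ g x) = ρ g (L x) := by
        intro g x
        simp [hL, LinearMap.sub_apply, Module.algebraMap_end_apply, hT, map_smul]
      have hker : ∀ (g : G) (x : V), x ∈ LinearMap.ker L → ρ g x ∈ LinearMap.ker L := by
        intro g x hx
        rw [LinearMap.mem_ker] at hx ⊢
        rw [hcomm, hx, map_zero]
      rcases hirr _ hker with h | h
      · rwa [← LinearMap.ker_eq_bot]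
      · exfalso
        apply hLne
        ext x
        have : x ∈ LinearMap.ker L := h ▸ Submodule.mem_top
        simpa using this
    have hsurj : ∀ μ : ℂ, Function.Surjective (T - algebraMap ℂ (Module.End ℂ V) μ) := by
      intro μ
      set L := T - algebraMap ℂ (Module.End ℂ V) μ with hL
      have hLne : L ≠ 0 := by
        intro h
        exact hc μ (by rwa [sub_eq_zero] at h)
      have hcomm : ∀ (g : G) (x : V), L (ρ g x) = ρ g (L x) := by
        intro g x
        simp [hL, LinearMap.sub_apply, Module.algebraMap_end_apply, hT, map_smul]
      have hrg : ∀ (g : G) (x : V), x ∈ LinearMap.range L → ρ g x ∈ LinearMap.range L := by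
        rintro g _ ⟨y, rfl⟩
        exact ⟨ρ g y, (hcomm g y)⟩
      rcases hirr _ hrg with h | h
      · exfalso
        apply hLne
        ext x
        have : L x ∈ (⊥ : Submodule ℂ V) := h ▸ LinearMap.mem_range_self L x
        simpa using this
      · rwa [← LinearMap.range_eq_top]
    choose w hw using fun μ : ℂ => hsurj μ v
    have hli : LinearIndependent ℂ w := by
      rw [linearIndependent_iff']
      intro s c hsum i hi
      by_contra hci
      set q : ℂ[X] := ∑ μ ∈ s, C (c μ) * ∏ ν ∈ s.erase μ, (X - C ν) with hqdef
      have h2 : ∀ μ ∈ s, (Polynomial.aeval T (∏ ν ∈ s, (X - C ν))) (w μ)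
          = (Polynomial.aeval T (∏ ν ∈ s.erase μ, (X - C ν))) v := by
        intro μ hμ
        rw [← Finset.prod_erase_mul s _ hμ, map_mul, Module.End.mul_apply]
        congr 1
        have h3 : (Polynomial.aeval T (X - C μ : ℂ[X])) (w μ)
            = (T - algebraMap ℂ (Module.End ℂ V) μ) (w μ) := by
          simp [map_sub]
        rw [h3, hw μ]
      have hqv : (Polynomial.aeval T q) v = 0 := by
        calc (Polynomial.aeval T q) v
            = ∑ μ ∈ s, c μ • (Polynomial.aeval T (∏ ν ∈ s.erase μ, (X - C ν))) v := by
              rw [hqdef, map_sum]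
              simp only [map_mul, Polynomial.aeval_C, LinearMap.sum_apply, Module.End.mul_apply,
                Module.algebraMap_end_apply]
          _ = ∑ μ ∈ s, c μ • (Polynomial.aeval T (∏ ν ∈ s, (X - C ν))) (w μ) := by
              refine Finset.sum_congr rfl fun μ hμ => ?_
              rw [h2 μ hμ]
          _ = (Polynomial.aeval T (∏ ν ∈ s, (X - C ν))) (∑ μ ∈ s, c μ • w μ) := by
              rw [map_sum]
              refine Finset.sum_congr rfl fun μ hμ => ?_
              rw [map_smul]
          _ = 0 := by rw [hsum, map_zero]
      have hqeval : q.eval i = c i * ∏ ν ∈ s.erase i, (i - ν) := by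
        rw [hqdef, Polynomial.eval_finset_sum]
        rw [Finset.sum_eq_single i]
        · simp [Polynomial.eval_prod]
        · intro b hb hbi
          have hmem : i ∈ s.erase b := Finset.mem_erase.mpr ⟨fun h => hbi h.symm, hi⟩
          rw [Polynomial.eval_mul, Polynomial.eval_prod]
          rw [Finset.prod_eq_zero hmem (by simp)]
          ring
        · intro h
          exact absurd hi h
      have hqne : q ≠ 0 := by
        intro h
        rw [h, Polynomial.eval_zero] at hqeval
        have hne : c i * ∏ ν ∈ s.erase i, (i - ν) ≠ 0 :=
          mul_ne_zero hci (Finset.prod_ne_zero_iff.mpr fun ν hν =>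
            sub_ne_zero.mpr (Ne.symm (Finset.mem_erase.mp hν).1))
        exact hne hqeval.symm
      have hainj := aeval_injective_of_forall_sub_injective T hinj q.natDegree q hqne rfl
      have hv0 : v = 0 := by
        apply hainj
        simpa using hqv
      exact hv hv0
    have hcard : (Cardinal.continuum : Cardinal) ≤ Cardinal.aleph0 := by
      rw [← Cardinal.mk_complex]
      exact hli.cardinal_le_rank.trans hrank
    exact absurd hcard Cardinal.aleph0_lt_continuum.not_ge
  -- the center acts by scalars
  have hcen : ∀ z ∈ Subgroup.center G, ∃ c : ℂ, ∀ x : V, ρ z x = c • x := by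
    intro z hz
    obtain ⟨c, hc⟩ := key ((ρ z : V ≃ₗ[ℂ] V) : V →ₗ[ℂ] V) (fun g x => by
      have h1 : g * z = z * g := Subgroup.mem_center_iff.mp hz g
      calc (ρ z) (ρ g x) = (ρ (z * g)) x := (mul_apply z g x).symm
        _ = (ρ (g * z)) x := by rw [← h1]
        _ = (ρ g) ((ρ z) x) := mul_apply g z x)
    refine ⟨c, fun x => ?_⟩
    have := congrArg (fun L : V →ₗ[ℂ] V => L x) hc
    simpa [Module.algebraMap_end_apply] using this
  -- finitely many coset representatives span
  haveI : Finite (G ⧸ Subgroup.center G) := by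
    haveI := hZ
    exact Subgroup.finite_quotient_of_finiteIndex (H := Subgroup.center G)
  set S : Set V := Set.range fun q : G ⧸ Subgroup.center G => ρ (Quotient.out q) v with hSdef
  have hSinv : ∀ g : G, ∀ x ∈ S, ρ g x ∈ Submodule.span ℂ S := by
    rintro g _ ⟨q, rfl⟩
    set g₀ := Quotient.out q with hg₀
    set q' : G ⧸ Subgroup.center G := QuotientGroup.mk (g * g₀) with hq'
    set g₁ := Quotient.out q' with hg₁
    have hzmem : g₁⁻¹ * (g * g₀) ∈ Subgroup.center G := by
      rw [← QuotientGroup.eq]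
      rw [hg₁, QuotientGroup.out_eq']
    obtain ⟨c, hc⟩ := hcen _ hzmem
    have heq : ρ g (ρ g₀ v) = c • ρ g₁ v := by
      have h1 : g * g₀ = g₁ * (g₁⁻¹ * (g * g₀)) := by group
      calc ρ g (ρ g₀ v) = ρ (g * g₀) v := (mul_apply g g₀ v).symm
        _ = ρ (g₁ * (g₁⁻¹ * (g * g₀))) v := by rw [← h1]
        _ = ρ g₁ (ρ (g₁⁻¹ * (g * g₀)) v) := mul_apply _ _ v
        _ = ρ g₁ (c • v) := by rw [hc v]
        _ = c • ρ g₁ v := by rw [map_smul]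
    rw [heq]
    exact Submodule.smul_mem _ c (Submodule.subset_span ⟨q', rfl⟩)
  have htop : Submodule.span ℂ S = ⊤ := by
    rcases hirr _ (span_inv S hSinv) with h | h
    · exfalso
      have hmem : ρ (Quotient.out ((1 : G) : G ⧸ Subgroup.center G)) v ∈ Submodule.span ℂ S :=
        Submodule.subset_span ⟨_, rfl⟩
      rw [h] at hmem
      simp only [Submodule.mem_bot] at hmem
      exact hv ((ρ _).map_eq_zero_iff.mp hmem)
    · exact h
  have : Module.Finite ℂ V :=
    ⟨Submodule.fg_def.mpr ⟨S, Set.finite_range _, htop⟩⟩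
  exact this
end

section
/- Let Q be a finite quandle, G a uniquely divisible group (for every integer n ≥ 1 the map g ↦ gⁿ is a bijection of G), and f : Q → Conj(G) a quandle morphism. Then the image of f is a trivial quandle, i.e. f(x) f(y) f(x)⁻¹ = f(y) for all x, y ∈ Q. -/
open Quandles

/-- if `Q` is a finite quandle, `G` is a uniquely divisible group and
`f : Q → Conj G` is a quandle morphism, then the image of `f` is a trivial quandle:
`f x * f y * (f x)⁻¹ = f y` for all `x, y`. -/
theorem quandle_morphism_to_uniquely_divisible_trivial (Q : Type) [Quandle Q] [Fintype Q]
    (G : Type) [Group G]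
    (hdiv : ∀ n : ℕ, 1 ≤ n → Function.Bijective fun g : G => g ^ n)
    (f : Q → G) (hf : ∀ x y : Q, f (x ◃ y) = f x * f y * (f x)⁻¹) :
    ∀ x y : Q, f x * f y * (f x)⁻¹ = f y := by
  intro x y
  -- iterate formula
  have key : ∀ k : ℕ, f ((fun z => x ◃ z)^[k] y) = (f x) ^ k * f y * ((f x) ^ k)⁻¹ := by
    intro k
    induction k with
    | zero => simp
    | succ n ih =>
      rw [Function.iterate_succ_apply', hf, ih]
      group
  set σ : Equiv.Perm Q := Rack.act' x with hσ
  have hiter : ∀ k : ℕ, (fun z => x ◃ z)^[k] y = (σ ^ k) y := by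
    intro k
    induction k with
    | zero => simp
    | succ n ih => rw [Function.iterate_succ_apply', ih, pow_succ', Equiv.Perm.mul_apply]; rfl
  set k := orderOf σ with hk
  have hkpos : 1 ≤ k := (orderOf_pos σ)
  have hfix : (fun z => x ◃ z)^[k] y = y := by
    rw [hiter, pow_orderOf_eq_one]; rfl
  have hcomm : (f x) ^ k * f y * ((f x) ^ k)⁻¹ = f y := by
    rw [← key, hfix]
  -- now use unique divisibility
  have hinj := (hdiv k hkpos).injective
  have hc : f y * (f x) ^ k = (f x) ^ k * f y :=
    (mul_inv_eq_iff_eq_mul.mp hcomm).symm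
  have : (f y * f x * (f y)⁻¹) ^ k = (f x) ^ k := by
    rw [conj_pow]
    exact mul_inv_eq_iff_eq_mul.mpr hc
  have heq : f y * f x * (f y)⁻¹ = f x := hinj this
  exact mul_inv_eq_iff_eq_mul.mpr (mul_inv_eq_iff_eq_mul.mp heq).symm
end

section
/- Let Q be a quandle. The abelianization of the enveloping group G(Q) is isomorphic to the free abelian group on the set Q/Inn(Q) of orbits of Q under the action of Inn(Q), via an isomorphism sending the class of φ_Q(x) to the basis element indexed by the orbit of x, for every x ∈ Q. -/
open Quandles

section Aux

lemma shelfHom_ext {S₁ S₂ : Type*} [Shelf S₁] [Shelf S₂] {f g : S₁ →◃ S₂}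
    (h : ∀ x, f x = g x) : f = g := by
  cases f; cases g
  congr
  funext x
  exact h x

variable (Q : Type) [Quandle Q]

/-- The orbit of `x ◃ y` equals the orbit of `y`. -/
lemma orbit_act_eq (x y : Q) :
    Quotient.mk (MulAction.orbitRel (quandleInn Q) Q) (x ◃ y) =
      Quotient.mk (MulAction.orbitRel (quandleInn Q) Q) y := by
  apply Quotient.sound
  refine ⟨⟨(Rack.act' x : Equiv.Perm Q), Subgroup.subset_closure ⟨x, rfl⟩⟩, ?_⟩
  rfl

/-- In the abelianization, `φ` is constant on orbits of the inner group. -/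
lemma abOf_act (g : Equiv.Perm Q) (hg : g ∈ quandleInn Q) :
    ∀ y : Q, Abelianization.of (Rack.toEnvelGroup Q (g y)) =
      Abelianization.of (Rack.toEnvelGroup Q y) := by
  refine Subgroup.closure_induction ?_ ?_ ?_ ?_ hg
  · rintro _ ⟨x, rfl⟩ y
    have h : Rack.toEnvelGroup Q (x ◃ y) =
        Rack.toEnvelGroup Q x * Rack.toEnvelGroup Q y * (Rack.toEnvelGroup Q x)⁻¹ :=
      (Rack.toEnvelGroup Q).map_act
    show Abelianization.of (Rack.toEnvelGroup Q (x ◃ y)) = _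
    rw [h, map_mul, map_mul, map_inv, mul_comm, inv_mul_cancel_left]
  · intro y; rfl
  · intro a b _ _ ha hb y
    show Abelianization.of (Rack.toEnvelGroup Q (a (b y))) = _
    rw [ha, hb]
  · intro a _ ha y
    have := ha (a⁻¹ y)
    simpa using this.symm

end Aux

/-- the abelianization of `G(Q)` is isomorphic to the free abelian group
on the set `Q/Inn(Q)` of orbits, by an isomorphism sending the class of `φ_Q x` to the
basis element indexed by the orbit of `x`. -/
theorem abelianization_envelGroup_iso_freeAbelianGroup_orbits (Q : Type) [Quandle Q] :
    ∃ e : Abelianization (Rack.EnvelGroup Q) ≃*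
        Multiplicative (FreeAbelianGroup (MulAction.orbitRel.Quotient (quandleInn Q) Q)),
      ∀ x : Q, e (Abelianization.of (Rack.toEnvelGroup Q x)) =
        Multiplicative.ofAdd (FreeAbelianGroup.of
          (Quotient.mk (MulAction.orbitRel (quandleInn Q) Q) x)) := by
  set O := MulAction.orbitRel.Quotient (quandleInn Q) Q with hO
  set M := Multiplicative (FreeAbelianGroup O) with hM
  -- the shelf hom from Q to Conj M
  let f : Q →◃ Quandle.Conj M :=
    { toFun := fun x => Multiplicative.ofAdd (FreeAbelianGroup.of
        (Quotient.mk (MulAction.orbitRel (quandleInn Q) Q) x))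
      map_act' := by
        intro x y
        rw [Quandle.conj_act_eq_conj, orbit_act_eq Q x y, mul_comm, inv_mul_cancel_left] }
  let F : Rack.EnvelGroup Q →* M := Rack.toEnvelGroup.map f
  let Fab : Abelianization (Rack.EnvelGroup Q) →* M := Abelianization.lift F
  -- the inverse map
  let b : O → Additive (Abelianization (Rack.EnvelGroup Q)) :=
    Quotient.lift (fun x => Additive.ofMul (Abelianization.of (Rack.toEnvelGroup Q x)))
      (by
        rintro x y ⟨⟨g, hg⟩, rfl⟩
        exact congrArg Additive.ofMul (abOf_act Q g hg y))
  let B : Multiplicative (FreeAbelianGroup O) →* Abelianization (Rack.EnvelGroup Q) :=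
    AddMonoidHom.toMultiplicativeLeft (FreeAbelianGroup.lift b)
  have hFx : ∀ x : Q, Fab (Abelianization.of (Rack.toEnvelGroup Q x)) =
      Multiplicative.ofAdd (FreeAbelianGroup.of
        (Quotient.mk (MulAction.orbitRel (quandleInn Q) Q) x)) := by
    intro x
    show F (Rack.toEnvelGroup Q x) = _
    have := congrArg (fun h : Q →◃ Quandle.Conj M => h.toFun x)
      (Rack.toEnvelGroup.univ Q M f)
    exact this
  have hBx : ∀ x : Q, B (Multiplicative.ofAdd (FreeAbelianGroup.of
      (Quotient.mk (MulAction.orbitRel (quandleInn Q) Q) x))) =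
      Abelianization.of (Rack.toEnvelGroup Q x) := by
    intro x
    exact congrArg Additive.toMul (FreeAbelianGroup.lift_apply_of (f := b)
      (Quotient.mk (MulAction.orbitRel (quandleInn Q) Q) x))
  have hBF : B.comp Fab = MonoidHom.id _ := by
    apply Abelianization.hom_ext
    have huniq : ∀ g : Rack.EnvelGroup Q →* Abelianization (Rack.EnvelGroup Q),
        g = Rack.toEnvelGroup.map ((Quandle.Conj.map g).comp (Rack.toEnvelGroup Q)) :=
      fun g => Rack.toEnvelGroup.univ_uniq Q _ _ g rfl
    rw [MonoidHom.id_comp]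
    conv_lhs => rw [huniq ((B.comp Fab).comp Abelianization.of)]
    conv_rhs => rw [huniq (Abelianization.of)]
    congr 1
    apply shelfHom_ext
    intro x
    show B (Fab (Abelianization.of (Rack.toEnvelGroup Q x))) =
      Abelianization.of (Rack.toEnvelGroup Q x)
    rw [hFx x, hBx x]
  have hFB : Fab.comp B = MonoidHom.id _ := by
    have : (MonoidHom.toAdditiveLeft (Fab.comp B)) = MonoidHom.toAdditiveLeft
        (MonoidHom.id (Multiplicative (FreeAbelianGroup O))) := by
      apply FreeAbelianGroup.lift_ext
      intro q
      induction q using Quotient.inductionOn with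
      | h x =>
        show Multiplicative.toAdd (Fab (B (Multiplicative.ofAdd (FreeAbelianGroup.of (Quotient.mk _ x : O))))) = _
        rw [hBx x, hFx x]
        rfl
    exact MonoidHom.toAdditiveLeft.injective this
  refine ⟨MonoidHom.toMulEquiv Fab B hBF hFB, hFx⟩
end

section
/- Let Q be a nonempty indecomposable quandle, i.e. the action of Inn(Q) on Q is transitive. Then for every nilpotent group G, every quandle morphism f : Q → Conj(G) is constant. -/
open Quandles

lemma aux_inv_const (Q : Type) [Quandle Q]
    (htrans : ∀ x y : Q, ∃ g : quandleInn Q, (g : Equiv.Perm Q) x = y)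
    {G : Type} (f : Q → G) (hfix : ∀ x y : Q, f (x ◃ y) = f y) :
    ∀ x y : Q, f x = f y := by
  have key : ∀ g ∈ quandleInn Q, ∀ y : Q, f (g y) = f y := by
    intro g hg
    refine Subgroup.closure_induction ?_ ?_ ?_ ?_ hg
    · rintro p ⟨x, rfl⟩ y
      exact hfix x y
    · intro y; rfl
    · intro a b _ _ ha hb y
      simpa using (ha (b y)).trans (hb y)
    · intro a _ ha y
      have := ha (a⁻¹ y)
      simpa using this.symm
  intro x y
  obtain ⟨g, hgx⟩ := htrans x y
  rw [← hgx]
  exact (key g g.2 x).symm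

lemma aux_nilp : ∀ n : ℕ, ∀ (G : Type) [Group G] [Group.IsNilpotent G],
    Group.nilpotencyClass G ≤ n →
    ∀ (Q : Type) [Quandle Q] [Nonempty Q],
    (∀ x y : Q, ∃ g : quandleInn Q, (g : Equiv.Perm Q) x = y) →
    ∀ (f : Q → G), (∀ x y : Q, f (x ◃ y) = f x * f y * (f x)⁻¹) →
    ∀ x y : Q, f x = f y := by
  intro n
  induction n with
  | zero =>
    intro G _ _ hc Q _ _ htrans f hf x y
    have : Subsingleton G := nilpotencyClass_zero_iff_subsingleton.mp (Nat.le_zero.mp hc)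
    exact Subsingleton.elim _ _
  | succ n ih =>
    intro G _ _ hc Q _ _ htrans f hf
    set Z := Subgroup.center G
    let π : G →* G ⧸ Z := QuotientGroup.mk' Z
    have hquot : Group.nilpotencyClass (G ⧸ Z) ≤ n := by
      rw [nilpotencyClass_quotient_center]
      omega
    have hconst : ∀ x y : Q, π (f x) = π (f y) := by
      apply ih (G ⧸ Z) hquot Q htrans (fun q => π (f q))
      intro x y
      simp [hf x y]
    have hfix : ∀ x y : Q, f (x ◃ y) = f y := by
      intro x y
      have hmem := hconst x y
      rw [QuotientGroup.mk'_eq_mk'] at hmem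
      obtain ⟨z, hz, hzy⟩ := hmem
      have hcomm : f x * z = z * f x := (Subgroup.mem_center_iff.mp hz) (f x)
      rw [hf x y, ← hzy, hcomm]
      group
      exact hcomm
    exact aux_inv_const Q htrans f hfix

/-- if `Q` is a nonempty indecomposable quandle (the action of `Inn(Q)`
on `Q` is transitive), then every quandle morphism from `Q` to the conjugation quandle
of a nilpotent group is constant. -/
theorem quandle_morphism_to_nilpotent_constant (Q : Type) [Quandle Q] [Nonempty Q]
    (htrans : ∀ x y : Q, ∃ g : quandleInn Q, (g : Equiv.Perm Q) x = y)
    (G : Type) [Group G] [Group.IsNilpotent G]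
    (f : Q → G) (hf : ∀ x y : Q, f (x ◃ y) = f x * f y * (f x)⁻¹) :
    ∀ x y : Q, f x = f y :=
  aux_nilp (Group.nilpotencyClass G) G le_rfl Q htrans f hf
end

section
/- Let Q be a quandle. The enveloping group G(Q) is nilpotent if and only if the group Inn(Q) of inner automorphisms of Q is nilpotent (i.e. if and only if Q is a nilpotent quandle). -/
open Quandles

lemma envelGroup_closure_range (Q : Type) [Quandle Q] :
    Subgroup.closure (Set.range (Rack.toEnvelGroup Q)) = ⊤ := by
  rw [eq_top_iff]
  intro g _
  induction g using Quotient.inductionOn with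
  | h a =>
    induction a with
    | unit => exact Subgroup.one_mem _
    | incl x => exact Subgroup.subset_closure ⟨x, rfl⟩
    | mul a b ha hb => exact Subgroup.mul_mem _ (ha trivial) (hb trivial)
    | inv a ha => exact Subgroup.inv_mem _ (ha trivial)

lemma envelAction_conj (Q : Type) [Quandle Q] (g : Rack.EnvelGroup Q) (x : Q) :
    g * Rack.toEnvelGroup Q x * g⁻¹ =
      Rack.toEnvelGroup Q (Rack.envelAction g x) := by
  have hg : g ∈ Subgroup.closure (Set.range (Rack.toEnvelGroup Q)) := by
    rw [envelGroup_closure_range]; trivial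
  induction hg using Subgroup.closure_induction generalizing x with
  | mem y hy =>
    obtain ⟨y, rfl⟩ := hy
    have := (Rack.toEnvelGroup Q).map_act' (x := y) (y := x)
    simp only [Quandle.Conj] at this
    exact this.symm
  | one => simp
  | mul a b _ _ ha hb =>
    have : a * (b * Rack.toEnvelGroup Q x * b⁻¹) * a⁻¹ =
        (a * b) * Rack.toEnvelGroup Q x * (a * b)⁻¹ := by group
    rw [← this, hb, ha]
    simp
  | inv a _ ha =>
    have h1 := ha ((Rack.envelAction a)⁻¹ x)
    have h2 : Rack.envelAction a ((Rack.envelAction a)⁻¹ x) = x := by simp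
    rw [h2] at h1
    have : Rack.toEnvelGroup Q ((Rack.envelAction a)⁻¹ x) =
        a⁻¹ * Rack.toEnvelGroup Q x * a := by
      rw [← h1]; group
    rw [map_inv, this]
    group

lemma envelAction_ker_le_center (Q : Type) [Quandle Q] :
    (Rack.envelAction (R := Q)).ker ≤ Subgroup.center (Rack.EnvelGroup Q) := by
  intro g hg
  rw [Subgroup.mem_center_iff]
  intro h
  have hcomm : ∀ x : Q, Rack.toEnvelGroup Q x * g = g * Rack.toEnvelGroup Q x := by
    intro x
    have := envelAction_conj Q g x
    rw [MonoidHom.mem_ker.mp hg] at this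
    simp at this
    conv_lhs => rw [← this]
    group
  have hh : h ∈ Subgroup.closure (Set.range (Rack.toEnvelGroup Q)) := by
    rw [envelGroup_closure_range]; trivial
  induction hh using Subgroup.closure_induction with
  | mem y hy => obtain ⟨y, rfl⟩ := hy; exact hcomm y
  | one => simp
  | mul a b _ _ ha hb => rw [mul_assoc, hb, ← mul_assoc, ha, mul_assoc]
  | inv a _ ha =>
    calc a⁻¹ * g = a⁻¹ * (g * a) * a⁻¹ := by group
    _ = a⁻¹ * (a * g) * a⁻¹ := by rw [← ha]
    _ = g * a⁻¹ := by group

lemma envelAction_range (Q : Type) [Quandle Q] :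
    (Rack.envelAction (R := Q)).range = quandleInn Q := by
  rw [MonoidHom.range_eq_map, ← envelGroup_closure_range Q, MonoidHom.map_closure,
    quandleInn]
  congr 1
  ext p
  constructor
  · rintro ⟨_, ⟨x, rfl⟩, rfl⟩
    exact ⟨x, Equiv.ext fun y => (Rack.envelAction_prop x y).symm ▸ rfl⟩
  · rintro ⟨x, rfl⟩
    exact ⟨Rack.toEnvelGroup Q x, ⟨x, rfl⟩,
      Equiv.ext fun y => Rack.envelAction_prop x y⟩

/-- the enveloping group `G(Q)` is nilpotent iff `Inn(Q)` is nilpotent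
(i.e. iff the quandle `Q` is nilpotent). -/
theorem envelGroup_nilpotent_iff_inn_nilpotent (Q : Type) [Quandle Q] :
    Group.IsNilpotent (Rack.EnvelGroup Q) ↔ Group.IsNilpotent (quandleInn Q) := by
  constructor
  · intro h
    have h1 : Group.IsNilpotent (Rack.envelAction (R := Q)).range :=
      nilpotent_of_surjective (Rack.envelAction (R := Q)).rangeRestrict
        (Rack.envelAction (R := Q)).rangeRestrict_surjective
    exact nilpotent_of_mulEquiv (MulEquiv.subgroupCongr (envelAction_range Q))
  · intro h
    have hmem : ∀ g : Rack.EnvelGroup Q, Rack.envelAction g ∈ quandleInn Q := by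
      intro g
      rw [← envelAction_range Q]
      exact ⟨g, rfl⟩
    let f' : Rack.EnvelGroup Q →* quandleInn Q :=
      (Rack.envelAction (R := Q)).codRestrict (quandleInn Q) hmem
    refine isNilpotent_of_ker_le_center f' ?_
    rw [MonoidHom.ker_codRestrict]
    exact envelAction_ker_le_center Q
end

section
/- Let Q be a finite injective quandle, i.e. φ_Q : Q → G(Q) is injective. Then Inn(Q) is nilpotent if and only if there exist a finite nilpotent group G and an injective quandle morphism from Q to Conj(G). -/
open scoped DirectSum
open Quandles

lemma sep_add {K : Type} [AddCommGroup K] [AddGroup.FG K] {ι : Type} [Finite ι]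
    (σ : ι → K) (hσ : ∀ i, σ i ≠ 0) :
    ∃ (A : Type) (_ : AddCommGroup A) (_ : Finite A) (χ : K →+ A), ∀ i, χ (σ i) ≠ 0 := by
  classical
  obtain ⟨n, κ, hκ, p, hp, e, ⟨E⟩⟩ := AddCommGroup.equiv_free_prod_directSum_zmod K
  haveI : Fintype ι := Fintype.ofFinite ι
  set v : ι → (Fin n →₀ ℤ) := fun i => (E (σ i)).1 with hv
  set M : ℕ := 1 + Finset.univ.sup (fun i : ι => (v i).support.sup fun j => ((v i) j).natAbs)
    with hM
  have hMlt : ∀ i j, ((v i) j).natAbs < M := by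
    intro i j
    by_cases hj : j ∈ (v i).support
    · calc ((v i) j).natAbs ≤ (v i).support.sup (fun j => ((v i) j).natAbs) :=
            Finset.le_sup (f := fun j => ((v i) j).natAbs) hj
        _ ≤ Finset.univ.sup (fun i : ι => (v i).support.sup fun j => ((v i) j).natAbs) :=
            Finset.le_sup (f := fun i : ι => (v i).support.sup fun j => ((v i) j).natAbs)
              (Finset.mem_univ i)
        _ < M := by omega
    · rw [Finsupp.notMem_support_iff.mp hj]
      simp only [Int.natAbs_zero]
      omega
  haveI : NeZero M := ⟨by omega⟩
  haveI : ∀ k, NeZero (p k ^ e k) := fun k => ⟨pow_ne_zero _ (hp k).ne_zero⟩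
  haveI hfin2 : Finite (⨁ k : κ, ZMod (p k ^ e k)) :=
    Finite.of_equiv _ DFinsupp.equivFunOnFintype.symm
  set χ0 : (Fin n →₀ ℤ) →+ (Fin n → ZMod M) :=
    AddMonoidHom.mk' (fun w => fun j => ((w j : ℤ) : ZMod M))
      (by intro a b; funext j; simp) with hχ0
  set χ : K →+ (Fin n → ZMod M) × ⨁ k : κ, ZMod (p k ^ e k) :=
    (χ0.prodMap (AddMonoidHom.id _)).comp E.toAddMonoidHom with hχ
  refine ⟨(Fin n → ZMod M) × ⨁ k : κ, ZMod (p k ^ e k), inferInstance, inferInstance, χ, ?_⟩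
  intro i h
  apply hσ i
  have h1 : ∀ j, (((v i) j : ℤ) : ZMod M) = 0 := fun j => congrFun (congrArg Prod.fst h) j
  have h2 : (E (σ i)).2 = 0 := congrArg Prod.snd h
  have hv0 : v i = 0 := by
    ext j
    have hdvd := (ZMod.intCast_zmod_eq_zero_iff_dvd _ M).mp (h1 j)
    by_contra hne
    have hd : (M : ℕ) ∣ ((v i) j).natAbs := by
      simpa using (Int.natAbs_dvd_natAbs.mpr hdvd)
    have := Nat.le_of_dvd (Nat.pos_of_ne_zero (fun h0 => hne (Int.natAbs_eq_zero.mp h0))) hd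
    exact absurd (hMlt i j) (by omega)
  have hE0 : E (σ i) = 0 := by
    rw [Prod.ext_iff]
    exact ⟨hv0, h2⟩
  have := congrArg E.symm hE0
  simpa using this

lemma sep_mul {K : Type} [CommGroup K] [Group.FG K] {ι : Type} [Finite ι]
    (σ : ι → K) (hσ : ∀ i, σ i ≠ 1) :
    ∃ (A : Type) (_ : CommGroup A) (_ : Finite A) (χ : K →* A), ∀ i, χ (σ i) ≠ 1 := by
  haveI : AddGroup.FG (Additive K) := GroupFG.iff_add_fg.1 ‹_›
  obtain ⟨A, _, _, χ, hχ⟩ :=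
    sep_add (K := Additive K) (fun i => Additive.ofMul (σ i)) (fun i h => hσ i h)
  refine ⟨Multiplicative A, inferInstance, inferInstance,
    MonoidHom.mk' (fun k => Multiplicative.ofAdd (χ (Additive.ofMul k)))
      (by intro a b; simp [map_add]), fun i h => hχ i ?_⟩
  simpa using h

section Envel

variable {Q : Type} [Quandle Q]

open Rack

lemma mem_closure_range_toEnvelGroup (g : EnvelGroup Q) :
    g ∈ Subgroup.closure (Set.range (toEnvelGroup Q)) := by
  induction g using Quotient.inductionOn with
  | h a =>
    induction a with
    | unit => exact one_mem _
    | incl x => exact Subgroup.subset_closure ⟨x, rfl⟩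
    | mul a b ha hb => exact mul_mem ha hb
    | inv a ha => exact inv_mem ha

lemma closure_range_toEnvelGroup :
    Subgroup.closure (Set.range (toEnvelGroup Q)) = ⊤ := by
  rw [Subgroup.eq_top_iff']
  exact mem_closure_range_toEnvelGroup

lemma conj_toEnvelGroup (g : EnvelGroup Q) (q : Q) :
    g * toEnvelGroup Q q * g⁻¹ = toEnvelGroup Q (envelAction g q) := by
  have hg := mem_closure_range_toEnvelGroup g
  induction hg using Subgroup.closure_induction generalizing q with
  | mem y hy =>
    obtain ⟨z, rfl⟩ := hy
    rw [envelAction_prop]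
    rw [ShelfHom.map_act (toEnvelGroup Q) (x := z) (y := q)]
    rfl
  | one => simp
  | mul a b ha hb iha ihb =>
    have : a * b * toEnvelGroup Q q * (a * b)⁻¹
        = a * (b * toEnvelGroup Q q * b⁻¹) * a⁻¹ := by group
    rw [this, ihb, iha, map_mul]
    rfl
  | inv a ha ih =>
    have h1 := ih (envelAction a⁻¹ q)
    have h2 : envelAction a (envelAction a⁻¹ q) = q := by
      rw [← Equiv.Perm.mul_apply, ← map_mul, mul_inv_cancel, map_one]
      rfl
    rw [h2] at h1
    rw [← h1]
    group

lemma ker_envelAction_le_center :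
    (envelAction (R := Q)).ker ≤ Subgroup.center (EnvelGroup Q) := by
  intro g hg
  rw [Subgroup.mem_center_iff]
  intro h
  have hmem := mem_closure_range_toEnvelGroup h
  induction hmem using Subgroup.closure_induction with
  | mem y hy =>
    obtain ⟨x, rfl⟩ := hy
    have hc := conj_toEnvelGroup g x
    rw [MonoidHom.mem_ker] at hg
    rw [hg] at hc
    simp only [Equiv.Perm.coe_one, id_eq] at hc
    exact (mul_inv_eq_iff_eq_mul.mp hc).symm
  | one => simp
  | mul a b ha hb iha ihb => exact Commute.mul_left iha ihb
  | inv a ha ih => exact Commute.inv_left ih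

lemma range_envelAction :
    (envelAction (R := Q)).range = quandleInn Q := by
  rw [MonoidHom.range_eq_map, ← closure_range_toEnvelGroup, MonoidHom.map_closure]
  unfold quandleInn
  congr 1
  rw [← Set.range_comp]
  refine congrArg Set.range ?_
  funext x
  refine Equiv.ext fun y => ?_
  exact (envelAction_prop x y).trans (act'_apply x y).symm

end Envel

/-- a finite injective quandle `Q` has nilpotent `Inn(Q)` iff `Q` embeds
(as a quandle, for conjugation) into some finite nilpotent group. -/
theorem finite_injective_quandle_nilpotent_iff_embeds (Q : Type) [Quandle Q] [Fintype Q]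
    (hinj : Function.Injective (Rack.toEnvelGroup Q)) :
    Group.IsNilpotent (quandleInn Q) ↔
      ∃ (G : Type) (_ : Group G) (_ : Fintype G), Group.IsNilpotent G ∧
        ∃ f : Q → G, Function.Injective f ∧
          ∀ x y : Q, f (x ◃ y) = f x * f y * (f x)⁻¹ := by
  classical
  constructor
  · intro hnil
    set φ := Rack.toEnvelGroup Q with hφ
    set ρ := (Rack.envelAction (R := Q)) with hρ
    have hcent : ρ.ker ≤ Subgroup.center (Rack.EnvelGroup Q) := ker_envelAction_le_center
    have hrange : ρ.range = quandleInn Q := range_envelAction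
    have hmem : ∀ g, ρ g ∈ quandleInn Q := fun g => hrange ▸ ⟨g, rfl⟩
    set ρ' : Rack.EnvelGroup Q →* quandleInn Q := ρ.codRestrict _ hmem with hρ'
    haveI hGnil : Group.IsNilpotent (Rack.EnvelGroup Q) := by
      refine isNilpotent_of_ker_le_center ρ' ?_
      rw [MonoidHom.ker_codRestrict]
      exact hcent
    haveI : Group.FG (Rack.EnvelGroup Q) := by
      rw [Group.fg_iff]
      exact ⟨Set.range φ, closure_range_toEnvelGroup, Set.finite_range _⟩
    set K := ρ.ker with hK
    haveI : Finite (Rack.EnvelGroup Q ⧸ K) :=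
      Finite.of_equiv _ (QuotientGroup.quotientKerEquivRange ρ).symm.toEquiv
    haveI : K.FiniteIndex := Subgroup.finiteIndex_of_finite_quotient (H := K)
    haveI : Group.FG K := inferInstance
    letI : CommGroup K :=
      { (inferInstance : Group K) with
        mul_comm := fun a b =>
          Subtype.ext ((Subgroup.mem_center_iff.mp (hcent a.2) ↑b).symm) }
    let ι := {p : Q × Q // p.1 ≠ p.2 ∧ (φ p.1)⁻¹ * φ p.2 ∈ K}
    haveI : Finite ι := Subtype.finite
    let σ : ι → K := fun i => ⟨(φ i.1.1)⁻¹ * φ i.1.2, i.2.2⟩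
    have hσ : ∀ i, σ i ≠ 1 := by
      intro i h
      apply i.2.1
      have h1 : (φ i.1.1)⁻¹ * φ i.1.2 = 1 := congrArg Subtype.val h
      exact hinj (inv_mul_eq_one.mp h1)
    obtain ⟨A, _, _, χ, hχ⟩ := sep_mul σ hσ
    set N : Subgroup (Rack.EnvelGroup Q) := Subgroup.map K.subtype χ.ker with hN
    have hNle : ∀ {g}, g ∈ N → g ∈ K := by
      rintro g ⟨k, hk, rfl⟩
      exact k.2
    haveI hNnormal : N.Normal := by
      constructor
      intro n hn g
      have hz := Subgroup.mem_center_iff.mp (hcent (hNle hn))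
      have heq : g * n * g⁻¹ = n := by
        rw [hz g, mul_assoc, mul_inv_cancel, mul_one]
      rw [heq]
      exact hn
    have hsub : N ≤ K := fun g hg => hNle hg
    haveI : N.FiniteIndex := by
      constructor
      have hNK : N.subgroupOf K = χ.ker := by
        rw [Subgroup.subgroupOf, hN]
        exact Subgroup.comap_map_eq_self_of_injective K.subtype_injective _
      have hrel : N.relIndex K ≠ 0 := by
        rw [Subgroup.relIndex, hNK]
        exact Subgroup.FiniteIndex.index_ne_zero
      rw [← Subgroup.relIndex_mul_index hsub]
      exact Nat.mul_ne_zero hrel Subgroup.FiniteIndex.index_ne_zero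
    haveI : Finite (Rack.EnvelGroup Q ⧸ N) := Subgroup.finite_quotient_of_finiteIndex (H := N)
    refine ⟨Rack.EnvelGroup Q ⧸ N, inferInstance, Fintype.ofFinite _, ?_,
      fun x => QuotientGroup.mk (φ x), ?_, ?_⟩
    · exact nilpotent_of_surjective (QuotientGroup.mk' N) (QuotientGroup.mk'_surjective N)
    · intro x y hxy
      by_contra hne
      have hd : (φ x)⁻¹ * φ y ∈ N := QuotientGroup.eq.mp hxy
      obtain ⟨k, hk, hkval⟩ := hd
      have hKmem : (φ x)⁻¹ * φ y ∈ K := by rw [← hkval]; exact k.2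
      let i : ι := ⟨(x, y), hne, hKmem⟩
      apply hχ i
      have hik : σ i = k := Subtype.ext hkval.symm
      rw [hik]
      exact hk
    · intro x y
      have hact : φ (x ◃ y) = φ x * φ y * (φ x)⁻¹ := ShelfHom.map_act φ
      simp only [hact, QuotientGroup.mk_mul, QuotientGroup.mk_inv]
  · rintro ⟨G, _, _, hGnil, f, hfinj, hf⟩
    haveI := hGnil
    -- inverse conjugation stays in the range of `f`
    have hfinv : ∀ x y : Q, f (x ◃⁻¹ y) = (f x)⁻¹ * f y * f x := by
      intro x y
      have h1 : f (x ◃ (x ◃⁻¹ y)) = f x * f (x ◃⁻¹ y) * (f x)⁻¹ := hf _ _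
      rw [Rack.act_invAct_eq] at h1
      rw [h1]
      group
    set S : Set G := Set.range f with hS
    have hconj : ∀ g ∈ Subgroup.closure S, ∀ x : Q,
        g * f x * g⁻¹ ∈ S ∧ g⁻¹ * f x * g ∈ S := by
      intro g hg
      induction hg using Subgroup.closure_induction with
      | mem y hy =>
        obtain ⟨z, rfl⟩ := hy
        intro x
        constructor
        · exact ⟨z ◃ x, hf z x⟩
        · exact ⟨z ◃⁻¹ x, hfinv z x⟩
      | one => intro x; simp [hS]
      | mul a b ha hb iha ihb =>
        intro x
        constructor
        · obtain ⟨u, hu⟩ := (ihb x).1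
          obtain ⟨w, hw⟩ := (iha u).1
          refine ⟨w, ?_⟩
          rw [hw, hu]
          group
        · obtain ⟨u, hu⟩ := (iha x).2
          obtain ⟨w, hw⟩ := (ihb u).2
          refine ⟨w, ?_⟩
          rw [hw, hu]
          group
      | inv a ha ih =>
        intro x
        refine ⟨by simpa using (ih x).2, by simpa using (ih x).1⟩
    set H := Subgroup.closure S with hH
    -- every element of `H` induces a permutation of `Q`
    have hm : ∀ h : H, ∀ x : Q, ∃ y : Q, f y = (h : G) * f x * (h : G)⁻¹ := by
      intro h x
      exact (hconj h h.2 x).1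
    let m : H → Q → Q := fun h x => Classical.choose (hm h x)
    have hmspec : ∀ h x, f (m h x) = (h : G) * f x * (h : G)⁻¹ :=
      fun h x => Classical.choose_spec (hm h x)
    have hminj : ∀ h, Function.Injective (m h) := by
      intro h x x' hxx'
      apply hfinj
      have := congrArg f hxx'
      rw [hmspec, hmspec] at this
      exact mul_left_cancel (mul_right_cancel this)
    let e : H → Equiv.Perm Q := fun h =>
      Equiv.ofBijective (m h) ((Finite.injective_iff_bijective).mp (hminj h))
    have heapp : ∀ h x, e h x = m h x := fun _ _ => rfl
    let θ : H →* Equiv.Perm Q := MonoidHom.mk' e (by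
      intro a b
      refine Equiv.ext fun x => ?_
      apply hfinj
      rw [Equiv.Perm.mul_apply, heapp, heapp, heapp, hmspec, hmspec, hmspec]
      push_cast
      group)
    have hInn : quandleInn Q ≤ θ.range := by
      rw [quandleInn]
      rw [Subgroup.closure_le]
      rintro - ⟨x, rfl⟩
      have hx : f x ∈ H := Subgroup.subset_closure ⟨x, rfl⟩
      refine ⟨⟨f x, hx⟩, Equiv.ext fun y => hfinj ?_⟩
      simp only [Rack.act'_apply]
      exact (hmspec ⟨f x, hx⟩ y).trans (hf x y).symm
    haveI : Group.IsNilpotent H := Subgroup.isNilpotent H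
    haveI : Group.IsNilpotent θ.range :=
      nilpotent_of_surjective θ.rangeRestrict θ.rangeRestrict_surjective
    haveI : Group.IsNilpotent ((quandleInn Q).subgroupOf θ.range) :=
      Subgroup.isNilpotent _
    exact nilpotent_of_mulEquiv (Subgroup.subgroupOfEquivOfLe hInn)
end
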